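/- arXiv:1108.3055 — 5 statements merged into one kernel-verified Lean document; each statement's English description precedes it below -/
import Mathlib

section
/- Let R_1, R_2, …, R_n be normal subgroups of a group G. Then the fat commutator subgroup [[R_1, R_2, …, R_n]] equals the symmetric commutator subgroup [R_1, R_2, …, R_n]_S. -/
/-- A bracket arrangement shape: a binary tree whose leaves are the argument positions. -/
inductive BracketTree : Type
  | leaf : BracketTree
  | node : BracketTree → BracketTree → BracketTree

namespace BracketTree

/-- The weight of a bracket arrangement: its number of leaves. -/
def weight : BracketTree → ℕ
  | leaf => 1
  | node l r => l.weight + r.weight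

theorem weight_pos (t : BracketTree) : 0 < t.weight := by
  induction t with
  | leaf => simp [weight]
  | node l r hl hr => simp [weight]; omega

/-- Evaluation of a bracket arrangement `β^t : G^t → G`, where the binary bracket is the
commutator `[a₁, a₂] = a₁⁻¹a₂⁻¹a₁a₂`. -/
def eval {G : Type*} [Group G] : (t : BracketTree) → (Fin t.weight → G) → G
  | leaf, g => g ⟨0, Nat.one_pos⟩
  | node l r, g =>
      let a := l.eval fun i => g (Fin.castAdd r.weight i)
      let b := r.eval fun i => g (Fin.natAdd l.weight i)
      a⁻¹ * b⁻¹ * a * b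

end BracketTree

/-- The fat commutator subgroup `[[R₁, …, Rₙ]]`: the subgroup generated by all values
`β^t(g_{i₁}, …, g_{i_t})` of bracket arrangements on elements `g_{i_s} ∈ R_{i_s}`, where the
indices `i₁, …, i_t` run over all of `{1, …, n}` (i.e. the index function is surjective). -/
def fatCommutator {G : Type*} [Group G] {n : ℕ} (R : Fin n → Subgroup G) : Subgroup G :=
  Subgroup.closure { x | ∃ (t : BracketTree) (idx : Fin t.weight → Fin n),
    Function.Surjective idx ∧ ∃ g : Fin t.weight → G,
      (∀ s, g s ∈ R (idx s)) ∧ x = t.eval g }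

/-- The left-normed iterated commutator subgroup `[[…[[H₁, H₂], H₃], …], H_m]` of a list of
subgroups; the empty list gives the trivial subgroup and a singleton gives the subgroup itself. -/
def iteratedCommutator {G : Type*} [Group G] : List (Subgroup G) → Subgroup G
  | [] => ⊥
  | H :: L => L.foldl (fun A B => ⁅A, B⁆) H

/-- The symmetric commutator subgroup `[R₁, …, Rₙ]_S`: the join over all permutations `σ` of the
left-normed iterated commutator subgroups `[[…[[R_{σ(1)}, R_{σ(2)}], …], R_{σ(n)}]`. -/
def symmetricCommutator {G : Type*} [Group G] {n : ℕ} (R : Fin n → Subgroup G) : Subgroup G :=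
  ⨆ σ : Equiv.Perm (Fin n), iteratedCommutator (List.ofFn fun i => R (σ i))


namespace FatAux

variable {G : Type*} [Group G]
open Subgroup List
open scoped commutatorElement

/-! ### Commutator element identities -/

/-- The bracket used in the problem: `x⁻¹ * b⁻¹ * x * b`. -/
def cc (x b : G) : G := x⁻¹ * b⁻¹ * x * b

lemma cc_mul (x y b : G) : cc (x * y) b = y⁻¹ * cc x b * y * cc y b := by
  simp only [cc]; group

lemma cc_inv (x b : G) : cc x⁻¹ b = x * (cc x b)⁻¹ * x⁻¹ := by
  simp only [cc]; group

lemma cc_one (b : G) : cc 1 b = 1 := by simp [cc]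

lemma cc_conj (x b g : G) : cc (g⁻¹ * x * g) b = g⁻¹ * cc x (g * b * g⁻¹) * g := by
  simp only [cc]; group

lemma cc_eq_commutator (a b : G) : cc a b = ⁅a⁻¹, b⁻¹⁆ := by
  simp only [cc, commutatorElement_def]; group

lemma commutator_eq_cc (a b : G) : ⁅a, b⁆ = cc a⁻¹ b⁻¹ := by
  simp only [cc, commutatorElement_def]; group

lemma cc_mem_commutator {A B : Subgroup G} {a b : G} (ha : a ∈ A) (hb : b ∈ B) :
    cc a b ∈ ⁅A, B⁆ := by
  rw [cc_eq_commutator]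
  exact Subgroup.commutator_mem_commutator (A.inv_mem ha) (B.inv_mem hb)

lemma normal_iSup' {ι : Sort*} (f : ι → Subgroup G) (h : ∀ i, (f i).Normal) :
    (⨆ i, f i).Normal := by
  constructor
  intro x hx g
  refine Subgroup.iSup_induction f (C := fun x => ∀ g : G, g * x * g⁻¹ ∈ ⨆ i, f i) hx ?_ ?_ ?_ g
  · intro i x hx g; exact Subgroup.mem_iSup_of_mem i ((h i).conj_mem x hx g)
  · intro g; simpa using one_mem _
  · intro x y hx hy g
    have := mul_mem (hx g) (hy g)
    simpa [mul_assoc] using this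

lemma comm_mul_left (x y b : G) : ⁅x * y, b⁆ = x * ⁅y, b⁆ * x⁻¹ * ⁅x, b⁆ := by
  simp only [commutatorElement_def]; group

lemma commutator_iSup_le {ι : Sort*} (A : ι → Subgroup G) (B N : Subgroup G) (hN : N.Normal)
    (h : ∀ i, ⁅A i, B⁆ ≤ N) : ⁅⨆ i, A i, B⁆ ≤ N := by
  rw [Subgroup.commutator_le]
  intro x hx b hb
  refine Subgroup.iSup_induction A (C := fun x => ⁅x, b⁆ ∈ N) hx ?_ (by simpa using one_mem N) ?_
  · intro i x hx; exact h i (Subgroup.commutator_mem_commutator hx hb)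
  · intro x y hx hy
    rw [comm_mul_left]
    exact mul_mem (by simpa [mul_assoc] using hN.conj_mem _ hy x) hx

/-- Three subgroups style lemma: `⁅A, ⁅B, C⁆⁆ ≤ ⁅⁅A,B⁆,C⁆ ⊔ ⁅⁅A,C⁆,B⁆` for normal subgroups. -/
lemma commutator_right_le (A B C : Subgroup G) (hA : A.Normal) (hB : B.Normal) (hC : C.Normal) :
    ⁅A, ⁅B, C⁆⁆ ≤ ⁅⁅A, B⁆, C⁆ ⊔ ⁅⁅A, C⁆, B⁆ := by
  haveI := hA; haveI := hB; haveI := hC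
  set N : Subgroup G := ⁅⁅A, B⁆, C⁆ ⊔ ⁅⁅A, C⁆, B⁆ with hNdef
  haveI : N.Normal := Subgroup.sup_normal _ _
  set f := QuotientGroup.mk' N with hf
  have hbot : ∀ H : Subgroup G, H ≤ N → H.map f = ⊥ := by
    intro H hH
    rw [Subgroup.map_eq_bot_iff, QuotientGroup.ker_mk']
    exact hH
  have h1 : ⁅⁅B.map f, C.map f⁆, A.map f⁆ = ⊥ := by
    apply Subgroup.commutator_commutator_eq_bot_of_rotate
    · rw [← Subgroup.map_commutator, ← Subgroup.map_commutator]
      exact hbot _ (le_sup_of_le_right (le_of_eq (by rw [Subgroup.commutator_comm C A])))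
    · rw [← Subgroup.map_commutator, ← Subgroup.map_commutator]
      exact hbot _ le_sup_left
  have h2 : ⁅⁅B, C⁆, A⁆ ≤ N := by
    have := h1
    rw [← Subgroup.map_commutator, ← Subgroup.map_commutator, Subgroup.map_eq_bot_iff,
      QuotientGroup.ker_mk'] at this
    exact this
  calc ⁅A, ⁅B, C⁆⁆ = ⁅⁅B, C⁆, A⁆ := Subgroup.commutator_comm _ _
    _ ≤ N := h2

/-! ### Iterated commutators of lists -/

local notation "itc" => iteratedCommutator

lemma foldl_comm_mono : ∀ (L : List (Subgroup G)) {A B : Subgroup G}, A ≤ B →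
    L.foldl (fun A B => ⁅A, B⁆) A ≤ L.foldl (fun A B => ⁅A, B⁆) B := by
  intro L
  induction L with
  | nil => intro A B h; exact h
  | cons C L ih => intro A B h; exact ih (Subgroup.commutator_mono h le_rfl)

lemma foldl_comm_normal : ∀ (L : List (Subgroup G)) (A : Subgroup G), A.Normal →
    (∀ K ∈ L, K.Normal) → (L.foldl (fun A B => ⁅A, B⁆) A).Normal := by
  intro L
  induction L with
  | nil => intro A hA _; exact hA
  | cons C L ih =>
    intro A hA hL
    haveI := hA; haveI := hL C (by simp)
    exact ih ⁅A, C⁆ (Subgroup.commutator_normal A C) (fun K hK => hL K (by simp [hK]))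

lemma itc_normal (L : List (Subgroup G)) (hL : ∀ K ∈ L, K.Normal) : (itc L).Normal := by
  cases L with
  | nil => show (⊥ : Subgroup G).Normal; infer_instance
  | cons A L => exact foldl_comm_normal L A (hL A (by simp)) (fun K hK => hL K (by simp [hK]))

lemma itc_concat (l : List (Subgroup G)) (hl : l ≠ []) (B : Subgroup G) :
    itc (l ++ [B]) = ⁅itc l, B⁆ := by
  cases l with
  | nil => simp at hl
  | cons A l => simp [iteratedCommutator, List.foldl_append]

lemma foldl_comm_sublist_le {l' l : List (Subgroup G)} (h : l'.Sublist l) :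
    ∀ (A : Subgroup G), A.Normal → (∀ K ∈ l, K.Normal) →
      l.foldl (fun A B => ⁅A, B⁆) A ≤ l'.foldl (fun A B => ⁅A, B⁆) A := by
  induction h with
  | slnil => intro A _ _; exact le_rfl
  | @cons l' l b h ih =>
    intro A hA hl
    haveI := hA; haveI := hl b (by simp)
    calc (b :: l).foldl (fun A B => ⁅A, B⁆) A = l.foldl (fun A B => ⁅A, B⁆) ⁅A, b⁆ := rfl
      _ ≤ l'.foldl (fun A B => ⁅A, B⁆) ⁅A, b⁆ :=
          ih ⁅A, b⁆ (Subgroup.commutator_normal A b) (fun K hK => hl K (by simp [hK]))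
      _ ≤ l'.foldl (fun A B => ⁅A, B⁆) A :=
          foldl_comm_mono l' (Subgroup.commutator_le_left A b)
  | @cons_cons l' l b h ih =>
    intro A hA hl
    haveI := hA; haveI := hl b (by simp)
    exact ih ⁅A, b⁆ (Subgroup.commutator_normal A b) (fun K hK => hl K (by simp [hK]))

lemma itc_sublist_le : ∀ {l l' : List (Subgroup G)}, l'.Sublist l → l' ≠ [] →
    (∀ K ∈ l, K.Normal) → itc l ≤ itc l' := by
  intro l
  induction l with
  | nil => intro l' h hne _; cases List.sublist_nil.mp h; simp at hne
  | cons b m ih =>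
    intro l' h hne hl
    obtain ⟨a, t, rfl⟩ := List.exists_cons_of_ne_nil hne
    cases h with
    | cons _ h =>
      have hm : itc m ≤ itc (a :: t) :=
        ih h (by simp) (fun K hK => hl K (by simp [hK]))
      refine le_trans ?_ hm
      cases m with
      | nil => cases List.sublist_nil.mp h
      | cons c m' =>
        haveI := hl c (by simp)
        calc itc (b :: c :: m') = m'.foldl (fun A B => ⁅A, B⁆) ⁅b, c⁆ := rfl
          _ ≤ m'.foldl (fun A B => ⁅A, B⁆) c := foldl_comm_mono m' (Subgroup.commutator_le_right b c)
          _ = itc (c :: m') := rfl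
    | cons_cons _ h =>
      exact foldl_comm_sublist_le h b (hl b (by simp))
        (fun K hK => hl K (by simp [hK]))

/-! ### The join of iterated commutators over all permutations of a list -/

def permComm (l : List (Subgroup G)) : Subgroup G :=
  ⨆ m : {m : List (Subgroup G) // m.Perm l}, itc m.1

lemma le_permComm {m l : List (Subgroup G)} (h : m.Perm l) : itc m ≤ permComm l :=
  le_iSup (fun m : {m : List (Subgroup G) // m.Perm l} => itc m.1) ⟨m, h⟩

lemma permComm_le {l : List (Subgroup G)} {N : Subgroup G}
    (h : ∀ m, m.Perm l → itc m ≤ N) : permComm l ≤ N :=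
  iSup_le (fun m => h m.1 m.2)

lemma permComm_mono {l l' : List (Subgroup G)} (h : l.Perm l') : permComm l ≤ permComm l' :=
  permComm_le fun m hm => le_permComm (hm.trans h)

lemma permComm_normal {l : List (Subgroup G)} (hl : ∀ K ∈ l, K.Normal) : (permComm l).Normal :=
  normal_iSup' _ fun m => itc_normal m.1 (fun K hK => hl K (m.2.mem_iff.mp hK))

lemma comm_itc_le : ∀ (k : ℕ) (l m : List (Subgroup G)), m.length ≤ k → l ≠ [] → m ≠ [] →
    (∀ K ∈ l, K.Normal) → (∀ K ∈ m, K.Normal) →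
    ⁅itc l, itc m⁆ ≤ permComm (l ++ m) := by
  intro k
  induction k with
  | zero => intro l m hm _ hmne _ _; simp [List.length_eq_zero_iff] at hm; exact absurd hm hmne
  | succ k ih =>
    intro l m hmlen hlne hmne hlN hmN
    obtain rfl | ⟨m', b, hm⟩ := m.eq_nil_or_concat
    · exact absurd rfl hmne
    rw [List.concat_eq_append] at hm
    subst hm
    have hbN : b.Normal := hmN b (by simp)
    rcases eq_or_ne m' [] with rfl | hm'ne
    · -- m = [b]
      have h1 : ⁅itc l, itc ([] ++ [b])⁆ = itc (l ++ ([] ++ [b])) := by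
        show ⁅itc l, itc [b]⁆ = itc (l ++ [b])
        rw [itc_concat l hlne b]; rfl
      rw [h1]
      exact le_permComm (List.Perm.refl _)
    · -- m = m' ++ [b], m' ≠ []
      have hm'N : ∀ K ∈ m', K.Normal := fun K hK => hmN K (by simp [hK])
      have hm'len : m'.length ≤ k := by
        have := hmlen; simp at this; omega
      have hXn : (itc l).Normal := itc_normal l hlN
      have hYn : (itc m').Normal := itc_normal m' hm'N
      have hNn : (permComm (l ++ (m' ++ [b]))).Normal :=
        permComm_normal (by
          intro K hK
          rcases List.mem_append.mp hK with h | h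
          · exact hlN K h
          · exact hmN K h)
      have key := commutator_right_le (itc l) (itc m') b hXn hYn hbN
      have hitcm : itc (m' ++ [b]) = ⁅itc m', b⁆ := itc_concat m' hm'ne b
      rw [hitcm]
      refine le_trans key (sup_le ?_ ?_)
      · have h1 : ⁅itc l, itc m'⁆ ≤ permComm (l ++ m') := ih l m' hm'len hlne hm'ne hlN hm'N
        refine le_trans (Subgroup.commutator_mono h1 le_rfl) ?_
        refine commutator_iSup_le _ b _ hNn ?_
        rintro ⟨m'', hm''⟩
        have hm''ne : m'' ≠ [] := by
          intro h; rw [h] at hm''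
          have := hm''.length_eq
          simp at this
          exact hlne (List.length_eq_zero_iff.mp (by omega))
        rw [← itc_concat m'' hm''ne b]
        refine le_permComm ?_
        have : (m'' ++ [b]).Perm ((l ++ m') ++ [b]) := hm''.append_right [b]
        rw [List.append_assoc] at this
        exact this
      · have h2 : ⁅itc l, b⁆ = itc (l ++ [b]) := (itc_concat l hlne b).symm
        rw [h2]
        have h3 : ⁅itc (l ++ [b]), itc m'⁆ ≤ permComm ((l ++ [b]) ++ m') :=
          ih (l ++ [b]) m' hm'len (by simp) hm'ne
            (by intro K hK; rcases List.mem_append.mp hK with h | h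
                · exact hlN K h
                · simp at h; subst h; exact hbN)
            hm'N
        refine le_trans h3 (permComm_mono ?_)
        calc (l ++ [b]) ++ m' ~ l ++ ([b] ++ m') := by rw [List.append_assoc]
          _ ~ l ++ (m' ++ [b]) := List.Perm.append_left l (List.perm_append_comm)

/-! ### Subgroup-level evaluation of bracket trees -/

def evalS : (t : BracketTree) → (Fin t.weight → Subgroup G) → Subgroup G
  | .leaf, H => H ⟨0, Nat.one_pos⟩
  | .node l r, H => ⁅evalS l (fun i => H (Fin.castAdd r.weight i)),
      evalS r (fun i => H (Fin.natAdd l.weight i))⁆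

lemma eval_mem_evalS : ∀ (t : BracketTree) (g : Fin t.weight → G) (H : Fin t.weight → Subgroup G),
    (∀ s, g s ∈ H s) → t.eval g ∈ evalS t H := by
  intro t
  induction t with
  | leaf => intro g H hg; exact hg _
  | node l r ihl ihr =>
    intro g H hg
    exact cc_mem_commutator (ihl _ _ (fun s => hg _)) (ihr _ _ (fun s => hg _))

lemma evalS_le_permComm : ∀ (t : BracketTree) (H : Fin t.weight → Subgroup G),
    (∀ s, (H s).Normal) → evalS t H ≤ permComm (List.ofFn H) := by
  intro t
  induction t with
  | leaf =>
    intro H hH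
    show H ⟨0, Nat.one_pos⟩ ≤ permComm (List.ofFn H)
    have h : List.ofFn H = [H ⟨0, Nat.one_pos⟩] := by
      change List.ofFn (n := 1) (fun i : Fin 1 => H i) = _
      rw [List.ofFn_succ, List.ofFn_zero]
      exact congrArg (· :: []) (congrArg H (Fin.ext rfl))
    rw [h]
    have h2 : (H ⟨0, Nat.one_pos⟩ : Subgroup G) = itc [H ⟨0, Nat.one_pos⟩] := rfl
    rw [h2]
    exact le_permComm (List.Perm.refl _)
  | node l r ihl ihr =>
    intro H hH
    set Hl := fun i => H (Fin.castAdd r.weight i) with hHl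
    set Hr := fun i => H (Fin.natAdd l.weight i) with hHr
    have hofn : List.ofFn H = List.ofFn Hl ++ List.ofFn Hr := List.ofFn_add (f := H)
    have hNn : (permComm (List.ofFn H)).Normal := by
      apply permComm_normal
      intro K hK
      obtain ⟨i, rfl⟩ := List.mem_ofFn.mp hK
      exact hH i
    show ⁅evalS l Hl, evalS r Hr⁆ ≤ permComm (List.ofFn H)
    have h1 : evalS l Hl ≤ permComm (List.ofFn Hl) := ihl Hl (fun s => hH _)
    have h2 : evalS r Hr ≤ permComm (List.ofFn Hr) := ihr Hr (fun s => hH _)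
    refine le_trans (Subgroup.commutator_mono h1 h2) ?_
    refine commutator_iSup_le _ _ _ hNn ?_
    rintro ⟨m₁, hm₁⟩
    rw [Subgroup.commutator_comm]
    refine commutator_iSup_le _ _ _ hNn ?_
    rintro ⟨m₂, hm₂⟩
    rw [Subgroup.commutator_comm]
    have hm₁ne : m₁ ≠ [] := by
      intro h
      have := hm₁.length_eq
      rw [h] at this; simp at this
      have := l.weight_pos; omega
    have hm₂ne : m₂ ≠ [] := by
      intro h
      have := hm₂.length_eq
      rw [h] at this; simp at this
      have := r.weight_pos; omega
    have hm₁N : ∀ K ∈ m₁, K.Normal := by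
      intro K hK
      obtain ⟨i, rfl⟩ := List.mem_ofFn.mp (hm₁.mem_iff.mp hK)
      exact hH _
    have hm₂N : ∀ K ∈ m₂, K.Normal := by
      intro K hK
      obtain ⟨i, rfl⟩ := List.mem_ofFn.mp (hm₂.mem_iff.mp hK)
      exact hH _
    refine le_trans (comm_itc_le m₂.length m₁ m₂ le_rfl hm₁ne hm₂ne hm₁N hm₂N) ?_
    refine le_trans (permComm_mono ((hm₁.append hm₂))) ?_
    rw [← hofn]

/-! ### Permutations of mapped lists, dedup -/

lemma perm_map_exists {α β : Type*} (R : α → β) :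
    ∀ {l₁ l₂ : List β}, l₁.Perm l₂ → ∀ ι : List α, l₁ = ι.map R →
      ∃ κ : List α, κ.Perm ι ∧ l₂ = κ.map R := by
  intro l₁ l₂ h
  induction h with
  | nil => intro ι hι; exact ⟨ι, List.Perm.refl ι, hι.symm ▸ by simp [List.map_eq_nil_iff.mp hι.symm]⟩
  | @cons x l₁ l₂ h ih =>
    intro ι hι
    cases ι with
    | nil => simp at hι
    | cons i ι' =>
      simp only [List.map_cons, List.cons.injEq] at hι
      obtain ⟨κ', hκ', rfl⟩ := ih ι' hι.2
      exact ⟨i :: κ', hκ'.cons i, by simp [hι.1]⟩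
  | @swap x y l =>
    intro ι hι
    cases ι with
    | nil => simp at hι
    | cons i ι' =>
      cases ι' with
      | nil => simp at hι
      | cons j ι'' =>
        simp only [List.map_cons, List.cons.injEq] at hι
        refine ⟨j :: i :: ι'', List.Perm.swap i j ι'', ?_⟩
        simp [hι.1, hι.2.1, hι.2.2]
  | @trans l₁ l₂ l₃ h12 h23 ih12 ih23 =>
    intro ι hι
    obtain ⟨κ₂, hκ₂, h2⟩ := ih12 ι hι
    obtain ⟨κ₃, hκ₃, h3⟩ := ih23 κ₂ h2
    exact ⟨κ₃, hκ₃.trans hκ₂, h3⟩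

lemma ofFn_get_cast {α : Type*} (d : List α) {n : ℕ} (h : d.length = n) :
    List.ofFn (fun i : Fin n => d.get (Fin.cast h.symm i)) = d := by
  subst h
  simp [List.ofFn_get]

lemma nodup_full_length {n : ℕ} {d : List (Fin n)} (hd : d.Nodup) (hall : ∀ i, i ∈ d) :
    d.length = n := by
  have h1 : d.toFinset = Finset.univ := by
    ext i; simp [hall i]
  have := List.toFinset_card_of_nodup hd
  rw [h1] at this
  simp at this
  omega

/-! ### The `TT` predicate: iterated commutation into a normal subgroup -/

def TT (F : Subgroup G) : List (Subgroup G) → G → Prop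
  | [], x => x ∈ F
  | B :: L, x => ∀ b ∈ B, TT F L (cc x b)

variable {F : Subgroup G}

lemma TT_conj (hF : F.Normal) :
    ∀ (L : List (Subgroup G)), (∀ K ∈ L, K.Normal) → ∀ {x : G}, TT F L x →
      ∀ g : G, TT F L (g⁻¹ * x * g) := by
  intro L
  induction L with
  | nil =>
    intro _ x hx g
    simpa [TT] using hF.conj_mem x hx g⁻¹
  | cons B L ih =>
    intro hL x hx g b hb
    rw [cc_conj]
    exact ih (fun K hK => hL K (by simp [hK])) (hx _ ((hL B (by simp)).conj_mem b hb g)) g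

lemma TT_one : ∀ (L : List (Subgroup G)), TT F L (1 : G) := by
  intro L
  induction L with
  | nil => exact F.one_mem
  | cons B L ih => intro b hb; rw [cc_one]; exact ih

lemma TT_mul (hF : F.Normal) :
    ∀ (L : List (Subgroup G)), (∀ K ∈ L, K.Normal) → ∀ {x y : G},
      TT F L x → TT F L y → TT F L (x * y) := by
  intro L
  induction L with
  | nil => intro _ x y hx hy; exact F.mul_mem hx hy
  | cons B L ih =>
    intro hL x y hx hy b hb
    rw [cc_mul]
    have h1 : TT F L (y⁻¹ * cc x b * y) :=
      TT_conj hF L (fun K hK => hL K (by simp [hK])) (hx b hb) y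
    exact ih (fun K hK => hL K (by simp [hK])) h1 (hy b hb)

lemma TT_inv (hF : F.Normal) :
    ∀ (L : List (Subgroup G)), (∀ K ∈ L, K.Normal) → ∀ {x : G},
      TT F L x → TT F L x⁻¹ := by
  intro L
  induction L with
  | nil => intro _ x hx; exact F.inv_mem hx
  | cons B L ih =>
    intro hL x hx b hb
    rw [cc_inv]
    have h1 : TT F L (cc x b)⁻¹ := ih (fun K hK => hL K (by simp [hK])) (hx b hb)
    have h2 := TT_conj hF L (fun K hK => hL K (by simp [hK])) h1 x⁻¹
    simpa using h2

lemma foldTT (hF : F.Normal) :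
    ∀ (L : List (Subgroup G)) (A : Subgroup G), (∀ K ∈ L, K.Normal) →
      (∀ a ∈ A, TT F L a) → L.foldl (fun A B => ⁅A, B⁆) A ≤ F := by
  intro L
  induction L with
  | nil => intro A _ h; exact fun a ha => h a ha
  | cons B L ih =>
    intro A hL hA
    refine ih ⁅A, B⁆ (fun K hK => hL K (by simp [hK])) ?_
    intro x hx
    rw [Subgroup.commutator_def] at hx
    refine Subgroup.closure_induction ?_ ?_ ?_ ?_ hx
    · rintro y ⟨a, ha, b, hb, rfl⟩
      rw [commutator_eq_cc]
      exact hA a⁻¹ (A.inv_mem ha) b⁻¹ (B.inv_mem hb)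
    · exact TT_one L
    · intro y z _ _ hy hz
      exact TT_mul hF L (fun K hK => hL K (by simp [hK])) hy hz
    · intro y _ hy
      exact TT_inv hF L (fun K hK => hL K (by simp [hK])) hy

lemma TT_of : ∀ (L : List (Subgroup G)) (x : G),
    (∀ bs : List G, List.Forall₂ (fun b (B : Subgroup G) => b ∈ B) bs L →
      bs.foldl cc x ∈ F) → TT F L x := by
  intro L
  induction L with
  | nil => intro x h; exact h [] List.Forall₂.nil
  | cons B L ih =>
    intro x h b hb
    exact ih (cc x b) (fun bs hbs => h (b :: bs) (List.Forall₂.cons hb hbs))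

/-! ### Left combs -/

def comb : ℕ → BracketTree
  | 0 => .leaf
  | m + 1 => .node (comb m) .leaf

lemma comb_weight : ∀ m : ℕ, (comb m).weight = m + 1 := by
  intro m
  induction m with
  | zero => rfl
  | succ m ih => show (comb m).weight + 1 = m + 1 + 1; omega

lemma eval_comb' : ∀ (m : ℕ) (g' : Fin (m + 1) → G),
    (comb m).eval (fun i => g' (Fin.cast (comb_weight m) i)) =
      (List.ofFn (fun i : Fin m => g' i.succ)).foldl cc (g' 0) := by
  intro m
  induction m with
  | zero =>
    intro g'
    show g' _ = g' 0
    exact congrArg g' (Fin.ext rfl)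
  | succ m ih =>
    intro g'
    show cc ((comb m).eval fun i =>
        g' (Fin.cast (comb_weight (m+1)) (Fin.castAdd 1 i))) (g' (Fin.cast (comb_weight (m+1))
          (Fin.natAdd (comb m).weight ⟨0, Nat.one_pos⟩))) = _
    have h1 : (fun i => g' (Fin.cast (comb_weight (m+1)) (Fin.castAdd 1 i))) =
        (fun i => (fun j : Fin (m+1) => g' j.castSucc) (Fin.cast (comb_weight m) i)) := by
      funext i
      exact congrArg g' (Fin.ext rfl)
    rw [h1, ih (fun j : Fin (m+1) => g' j.castSucc)]
    rw [List.ofFn_succ' (fun i : Fin (m+1) => g' i.succ), List.concat_eq_append,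
      List.foldl_append]
    have e2 : g' (Fin.cast (comb_weight (m+1)) (Fin.natAdd (comb m).weight ⟨0, Nat.one_pos⟩)) =
        g' (Fin.last m).succ := congrArg g' (Fin.ext (by show (comb m).weight + 0 = m + 1; simp [comb_weight]))
    have e3 : (fun i : Fin m => g' i.succ.castSucc) = (fun i : Fin m => g' i.castSucc.succ) := by
      funext i; exact congrArg g' (Fin.ext rfl)
    have e4 : g' (0 : Fin (m+1)).castSucc = g' 0 := congrArg g' (Fin.ext rfl)
    rw [e2, e3, e4]
    rfl

lemma eval_comb_list (bs : List G) (x : G) (pf : (comb bs.length).weight = (x :: bs).length) :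
    (comb bs.length).eval (fun i => (x :: bs).get (Fin.cast pf i)) = bs.foldl cc x := by
  have h := eval_comb' bs.length (fun p : Fin (bs.length + 1) => (x :: bs).get
    (Fin.cast rfl p))
  have h1 : (fun i => (x :: bs).get (Fin.cast pf i)) =
      (fun i => (fun p : Fin (bs.length + 1) => (x :: bs).get (Fin.cast rfl p))
        (Fin.cast (comb_weight bs.length) i)) := by
    funext i
    exact congrArg _ (Fin.ext rfl)
  rw [h1, h]
  have e5 : ((x :: bs).get (Fin.cast rfl (0 : Fin (bs.length + 1)))) = x := by
    have h0 : (Fin.cast rfl (0 : Fin (bs.length + 1))) = ⟨0, Nat.succ_pos _⟩ :=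
      Fin.ext (by simp)
    rw [h0]
    rfl
  have e6 : (fun i : Fin bs.length => (x :: bs).get (Fin.cast rfl i.succ)) =
      (fun i : Fin bs.length => bs.get i) := by
    funext i
    have h0 : (Fin.cast rfl i.succ : Fin (bs.length + 1)) = i.succ := Fin.ext (by simp)
    rw [h0]
    simp
  rw [e5, e6, List.ofFn_get]

/-! ### The fat commutator subgroup is normal; generators from left-normed folds -/

lemma map_eval {G' : Type*} [Group G'] (φ : G →* G') :
    ∀ (t : BracketTree) (g : Fin t.weight → G), φ (t.eval g) = t.eval (fun s => φ (g s)) := by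
  intro t
  induction t with
  | leaf => intro g; rfl
  | node l r ihl ihr =>
    intro g
    show φ (_⁻¹ * _⁻¹ * _ * _) = _⁻¹ * _⁻¹ * _ * _
    rw [map_mul, map_mul, map_mul, map_inv, map_inv, ihl, ihr]

lemma fatCommutator_normal {n : ℕ} (R : Fin n → Subgroup G) (hR : ∀ i, (R i).Normal) :
    (fatCommutator R).Normal := by
  constructor
  intro x hx g
  have key : ∀ y ∈ { x | ∃ (t : BracketTree) (idx : Fin t.weight → Fin n),
      Function.Surjective idx ∧ ∃ gg : Fin t.weight → G,
        (∀ s, gg s ∈ R (idx s)) ∧ x = t.eval gg }, g * y * g⁻¹ ∈ fatCommutator R := by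
    rintro y ⟨t, idx, hsurj, gg, hgg, rfl⟩
    apply Subgroup.subset_closure
    refine ⟨t, idx, hsurj, fun s => g * gg s * g⁻¹, fun s => (hR (idx s)).conj_mem _ (hgg s) g, ?_⟩
    have := map_eval (MulAut.conj g).toMonoidHom t gg
    simp only [MulEquiv.coe_toMonoidHom, MulAut.conj_apply] at this
    exact this
  refine Subgroup.closure_induction key ?_ ?_ ?_ hx
  · simpa using (fatCommutator R).one_mem
  · intro a b _ _ ha hb
    have := (fatCommutator R).mul_mem ha hb
    simpa [mul_assoc] using this
  · intro a _ ha
    have := (fatCommutator R).inv_mem ha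
    simpa [mul_assoc] using this

lemma foldl_cc_mem_fat {n : ℕ} (R : Fin n → Subgroup G) (x : G) (bs : List G)
    (j : Fin n) (js : List (Fin n)) (hx : x ∈ R j)
    (hbs : List.Forall₂ (fun b i => b ∈ R i) bs js)
    (hall : ∀ i : Fin n, i ∈ j :: js) : bs.foldl cc x ∈ fatCommutator R := by
  have hlen : bs.length = js.length := hbs.length_eq
  have pf : (comb bs.length).weight = (x :: bs).length := by
    rw [comb_weight]; rfl
  have pf2 : (comb bs.length).weight = (j :: js).length := by
    rw [comb_weight]; simp [hlen]
  apply Subgroup.subset_closure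
  refine ⟨comb bs.length, fun s => (j :: js).get (Fin.cast pf2 s), ?_,
    fun s => (x :: bs).get (Fin.cast pf s), ?_, (eval_comb_list bs x pf).symm⟩
  · intro i
    obtain ⟨p, hp⟩ := List.get_of_mem (hall i)
    exact ⟨Fin.cast pf2.symm p, by rw [← hp]; exact congrArg _ (Fin.ext rfl)⟩
  · intro s
    rcases hs : (Fin.cast pf s : Fin (bs.length + 1)) with ⟨sv, hsv⟩
    have hs2 : (Fin.cast pf2 s : Fin (js.length + 1)) = ⟨sv, by omega⟩ := by
      have : (Fin.cast pf2 s : Fin (js.length + 1)).val = sv := by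
        have := congrArg Fin.val hs
        simpa using this
      exact Fin.ext this
    show (x :: bs).get (Fin.cast pf s) ∈ R ((j :: js).get (Fin.cast pf2 s))
    rw [hs, hs2]
    cases sv with
    | zero => simpa using hx
    | succ q =>
      have hq : q < bs.length := by omega
      have hgets : (x :: bs).get ⟨q + 1, hsv⟩ = bs.get ⟨q, hq⟩ := rfl
      have hgets2 : (j :: js).get ⟨q + 1, by simp [List.length_cons]; omega⟩ =
        js.get ⟨q, by omega⟩ := rfl
      rw [hgets, hgets2]
      exact (List.forall₂_iff_get.mp hbs).2 q hq (by omega)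

end FatAux

/-- For normal subgroups `R₁, …, Rₙ` of a group `G`, the fat commutator subgroup
`[[R₁, …, Rₙ]]` equals the symmetric commutator subgroup `[R₁, …, Rₙ]_S`. -/
theorem fatCommutator_eq_symmetricCommutator {G : Type*} [Group G] {n : ℕ}
    (R : Fin n → Subgroup G) (hR : ∀ i, (R i).Normal) :
    fatCommutator R = symmetricCommutator R := by
  open FatAux in
  apply le_antisymm
  · -- fat ≤ symmetric
    rw [fatCommutator]
    rw [Subgroup.closure_le]
    rintro x ⟨t, idx, hsurj, g, hg, rfl⟩
    have hmem : t.eval g ∈ evalS t (fun s => R (idx s)) :=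
      eval_mem_evalS t g _ (fun s => hg s)
    have h1 : evalS t (fun s => R (idx s)) ≤ permComm (List.ofFn (fun s => R (idx s))) :=
      evalS_le_permComm t _ (fun s => hR _)
    have h2 : permComm (List.ofFn (fun s => R (idx s))) ≤ symmetricCommutator R := by
      refine permComm_le ?_
      intro m hm
      have hmap : List.ofFn (fun s => R (idx s)) = (List.ofFn idx).map R :=
        List.map_ofFn.symm
      rw [hmap] at hm
      obtain ⟨κ, hκ, rfl⟩ := perm_map_exists R hm.symm (List.ofFn idx) rfl
      have hallκ : ∀ i : Fin n, i ∈ κ := by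
        intro i
        obtain ⟨s, rfl⟩ := hsurj i
        exact hκ.mem_iff.mpr (List.mem_ofFn.mpr ⟨s, rfl⟩)
      set d := κ.dedup with hd
      have hdnodup : d.Nodup := κ.nodup_dedup
      have halld : ∀ i : Fin n, i ∈ d := fun i => List.mem_dedup.mpr (hallκ i)
      have hdne : d ≠ [] := by
        have hn : 0 < n := by
          rcases Nat.eq_zero_or_pos n with h0 | h
          · subst h0; exact (idx ⟨0, t.weight_pos⟩).elim0
          · exact h
        exact List.ne_nil_of_mem (halld ⟨0, hn⟩)
      have hstep1 : iteratedCommutator (κ.map R) ≤ iteratedCommutator (d.map R) := by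
        refine itc_sublist_le (List.Sublist.map R κ.dedup_sublist) ?_ ?_
        · simpa using hdne
        · intro K hK
          obtain ⟨i, _, rfl⟩ := List.mem_map.mp hK
          exact hR i
      have hlen : d.length = n := nodup_full_length hdnodup halld
      have hinj : Function.Injective (fun i : Fin n => d.get (Fin.cast hlen.symm i)) := by
        intro a b hab
        have := (List.nodup_iff_injective_get).mp hdnodup hab
        have := congrArg Fin.val this
        simp at this
        exact Fin.ext this
      have hbij := Finite.injective_iff_bijective.mp hinj
      set σ : Equiv.Perm (Fin n) := Equiv.ofBijective _ hbij with hσ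
      have hofnσ : List.ofFn (fun i => R (σ i)) = d.map R := by
        have h1 : List.ofFn (fun i : Fin n => R (σ i)) =
            List.map R (List.ofFn (fun i : Fin n => d.get (Fin.cast hlen.symm i))) := by
          rw [List.map_ofFn]
          rfl
        rw [h1, ofFn_get_cast d hlen]
      refine le_trans hstep1 ?_
      rw [← hofnσ]
      exact le_iSup (fun σ : Equiv.Perm (Fin n) =>
        iteratedCommutator (List.ofFn fun i => R (σ i))) σ
    exact h2 (h1 hmem)
  · -- symmetric ≤ fat
    rw [symmetricCommutator]
    refine iSup_le ?_
    intro σ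
    cases n with
    | zero =>
      simp only [List.ofFn_zero]
      show (⊥ : Subgroup G) ≤ _
      exact bot_le
    | succ k =>
      rw [List.ofFn_succ]
      show (List.ofFn fun i : Fin k => R (σ i.succ)).foldl (fun A B => ⁅A, B⁆) (R (σ 0)) ≤ _
      refine foldTT (fatCommutator_normal R hR) _ _ ?_ ?_
      · intro K hK
        obtain ⟨i, rfl⟩ := List.mem_ofFn.mp hK
        exact hR _
      · intro a ha
        refine TT_of _ _ ?_
        intro bs hbs
        have hmap : (List.ofFn fun i : Fin k => R (σ i.succ)) =
            (List.ofFn fun i : Fin k => σ i.succ).map R := List.map_ofFn.symm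
        rw [hmap] at hbs
        have hbs' : List.Forall₂ (fun b i => b ∈ R i) bs (List.ofFn fun i : Fin k => σ i.succ) :=
          List.forall₂_map_right_iff.mp hbs
        refine foldl_cc_mem_fat R a bs (σ 0) _ ha hbs' ?_
        intro i
        rcases Fin.eq_zero_or_eq_succ (σ.symm i) with h0 | ⟨p, hp⟩
        · have : i = σ 0 := by rw [← h0]; simp
          exact this ▸ List.mem_cons_self
        · refine List.mem_cons_of_mem _ (List.mem_ofFn.mpr ⟨p, ?_⟩)
          show σ p.succ = i
          rw [← hp]
          simp
end

section
/- Let n ≥ 1 and let J be an index set. In the free group G_n^{*J} with basis {x_{i,j}(α) : 1 ≤ i < j ≤ n+1, α ∈ J}, with face homomorphisms d_t (0 ≤ t ≤ n) defined by the stated formulas, the Moore chain subgroup ⋂_{k=1}^{n} ker(d_k : G_n^{*J} → G_{n-1}^{*J}) equals R[{2, 3, …, n+1}]. -/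
/-- The index set of pairs `(i, j)` with `1 ≤ i < j ≤ m`. -/
abbrev PairIdx (m : ℕ) : Type :=
  {p : ℕ × ℕ // 1 ≤ p.1 ∧ p.1 < p.2 ∧ p.2 ≤ m}

/-- The free group `G_n^{*J}` on the generators `x_{i,j}(α)`, `1 ≤ i < j ≤ n+1`, `α ∈ J`. -/
abbrev FreeGp (n : ℕ) (J : Type) : Type :=
  FreeGroup (PairIdx (n + 1) × J)

/-- The face homomorphism `d_t : G_n^{*J} → G_{n-1}^{*J}` (for `0 ≤ t ≤ n`), defined on the
generators by the formulas: `d_t x_{i,j}(α) = x_{i-1,j-1}(α)` if `t+1 < i`; ` = 1` if `t+1 = i`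
or `t+1 = j`; `= x_{i,j-1}(α)` if `i < t+1 < j`; `= x_{i,j}(α)` if `t+1 > j`. -/
def faceMap (n : ℕ) (J : Type) (t : Fin (n + 1)) :
    FreeGroup (PairIdx (n + 1) × J) →* FreeGroup (PairIdx n × J) :=
  FreeGroup.lift fun q =>
    if h1 : (t : ℕ) + 1 < q.1.1.1 then
      FreeGroup.of (⟨(q.1.1.1 - 1, q.1.1.2 - 1), by
        have hp := q.1.2; have ht := t.isLt; omega⟩, q.2)
    else if h2 : (t : ℕ) + 1 = q.1.1.1 then 1
    else if h3 : (t : ℕ) + 1 < q.1.1.2 then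
      FreeGroup.of (⟨(q.1.1.1, q.1.1.2 - 1), by
        have hp := q.1.2; have ht := t.isLt; omega⟩, q.2)
    else if h4 : (t : ℕ) + 1 = q.1.1.2 then 1
    else FreeGroup.of (⟨(q.1.1.1, q.1.1.2), by
        have hp := q.1.2; have ht := t.isLt; omega⟩, q.2)

/-- The normal closure `R_{i,j}` in `G_n^{*J}` of the set `{x_{i,j}(α) : α ∈ J}`,
for a pair `p = (i, j)` with `1 ≤ i < j ≤ n+1`. -/
def Rpair (n : ℕ) (J : Type) (p : PairIdx (n + 1)) : Subgroup (FreeGp n J) :=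
  Subgroup.normalClosure (Set.range fun α : J => FreeGroup.of (p, α))

/-- The set of indices occurring among the entries of a list of pairs. -/
def pairsUnion {m : ℕ} (L : List (PairIdx m)) : Set ℕ :=
  {k | ∃ p ∈ L, k = p.1.1 ∨ k = p.1.2}

/-- `R[T]`: the join of all left-normed iterated commutator subgroups
`[[…[[R_{i₁,j₁}, R_{i₂,j₂}], …], R_{i_t,j_t}]` over nonempty finite sequences of pairs such that
every element of `T` occurs among the indices `i₁, j₁, …, i_t, j_t`. -/
def RT (n : ℕ) (J : Type) (T : Set ℕ) : Subgroup (FreeGp n J) :=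
  ⨆ (L : List (PairIdx (n + 1))) (_ : L ≠ []) (_ : T ⊆ pairsUnion L),
    iteratedCommutator (L.map (Rpair n J))

open scoped commutatorElement

namespace MooreAux

open Subgroup

variable {G : Type*} [Group G]

theorem normal_iSup {ι : Sort*} (S : ι → Subgroup G) (h : ∀ i, (S i).Normal) :
    (⨆ i, S i).Normal := by
  constructor
  intro x hx g
  refine Subgroup.iSup_induction S (C := fun x => g * x * g⁻¹ ∈ ⨆ i, S i) hx
    (fun i x hxi => Subgroup.mem_iSup_of_mem i ((h i).conj_mem x hxi g)) (by simpa using one_mem _) ?_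
  intro a b ha hb
  have hab : g * (a * b) * g⁻¹ = (g * a * g⁻¹) * (g * b * g⁻¹) := by group
  rw [hab]; exact mul_mem ha hb

theorem commutator_iSup_left_le {ι : Sort*} (A : ι → Subgroup G) (B K : Subgroup G)
    [hK : K.Normal] (h : ∀ i, ⁅A i, B⁆ ≤ K) : ⁅⨆ i, A i, B⁆ ≤ K := by
  rw [Subgroup.commutator_le]
  intro a ha b hb
  refine Subgroup.iSup_induction A (C := fun a => ⁅a, b⁆ ∈ K) ha
    (fun i x hx => (Subgroup.commutator_le.mp (h i)) x hx b hb) (by simpa using one_mem K) ?_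
  intro x y hx hy
  have hxy : ⁅x * y, b⁆ = x * ⁅y, b⁆ * x⁻¹ * ⁅x, b⁆ := by
    simp only [commutatorElement_def]; group
  rw [hxy]
  exact mul_mem (hK.conj_mem _ hy x) hx

theorem commutator_iSup_right_le {ι : Sort*} (A : ι → Subgroup G) (B K : Subgroup G)
    [K.Normal] (h : ∀ i, ⁅B, A i⁆ ≤ K) : ⁅B, ⨆ i, A i⁆ ≤ K := by
  rw [Subgroup.commutator_comm]
  exact commutator_iSup_left_le A B K fun i => commutator_comm (A i) B ▸ h i

theorem three_subgroups_le (A B C K : Subgroup G) [K.Normal]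
    (h1 : ⁅⁅B, C⁆, A⁆ ≤ K) (h2 : ⁅⁅C, A⁆, B⁆ ≤ K) : ⁅⁅A, B⁆, C⁆ ≤ K := by
  have key : ∀ X : Subgroup G, X ≤ K ↔ X.map (QuotientGroup.mk' K) = ⊥ := fun X => by
    rw [Subgroup.map_eq_bot_iff, QuotientGroup.ker_mk']
  rw [key] at h1 h2 ⊢
  rw [Subgroup.map_commutator, Subgroup.map_commutator] at h1 h2 ⊢
  exact Subgroup.commutator_commutator_eq_bot_of_rotate h1 h2

theorem commute_mk {X Y K : Subgroup G} [K.Normal] (h : ⁅X, Y⁆ ≤ K) {x y : G}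
    (hx : x ∈ X) (hy : y ∈ Y) : Commute ((x : G ⧸ K)) ((y : G ⧸ K)) := by
  have h1 : ((⁅x, y⁆ : G) : G ⧸ K) = 1 :=
    (QuotientGroup.eq_one_iff _).mpr (h (Subgroup.commutator_mem_commutator hx hy))
  have h2 : ((⁅x, y⁆ : G) : G ⧸ K) = ⁅(x : G ⧸ K), (y : G ⧸ K)⁆ :=
    map_commutatorElement (QuotientGroup.mk' K) x y
  rw [h2] at h1
  rw [commutatorElement_eq_one_iff_mul_comm] at h1
  exact h1

theorem key_identity {Q : Type*} [Group Q] (A B E F : Q)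
    (hEB : Commute E B) (hFA : Commute F A) (hEF : Commute E F)
    (hCE : Commute ⁅A, B⁆ E) (hCF : Commute ⁅A, B⁆ F) :
    ⁅E⁻¹ * A, F⁻¹ * B⁆ = ⁅A, B⁆ := by
  have hAF : A * F⁻¹ = F⁻¹ * A := (hFA.inv_left.eq).symm
  have hEB' : E * B⁻¹ = B⁻¹ * E := hEB.inv_right.eq
  calc ⁅E⁻¹ * A, F⁻¹ * B⁆
      = E⁻¹ * (A * F⁻¹) * B * A⁻¹ * (E * B⁻¹) * F := by
        simp only [commutatorElement_def]; group
    _ = E⁻¹ * (F⁻¹ * A) * B * A⁻¹ * (B⁻¹ * E) * F := by rw [hAF, hEB']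
    _ = (E⁻¹ * F⁻¹) * ⁅A, B⁆ * (E * F) := by
        simp only [commutatorElement_def]; group
    _ = (E⁻¹ * F⁻¹) * (E * F) * ⁅A, B⁆ := by
        rw [mul_assoc (E⁻¹ * F⁻¹), mul_assoc (E⁻¹ * F⁻¹), (hCE.mul_right hCF).eq]
    _ = ⁅A, B⁆ := by rw [hEF.eq]; group

theorem foldl_commutator_normal :
    ∀ (L : List (Subgroup G)) (H : Subgroup G), H.Normal → (∀ K ∈ L, K.Normal) →
      (L.foldl (fun A B => ⁅A, B⁆) H).Normal
  | [], H, hH, _ => hH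
  | K :: L, H, hH, hL => by
    have h1 : (⁅H, K⁆).Normal := by
      haveI := hH; haveI := hL K (by simp); infer_instance
    exact foldl_commutator_normal L ⁅H, K⁆ h1 (fun K' hK' => hL K' (by simp [hK']))

theorem foldl_le_normal (N : Subgroup G) [hN : N.Normal] :
    ∀ (Ms : List (Subgroup G)) (H : Subgroup G),
      (H ≤ N ∨ ∃ K ∈ Ms, K ≤ N) → Ms.foldl (fun A B => ⁅A, B⁆) H ≤ N
  | [], H, h => by
    rcases h with h | ⟨K, hK, _⟩
    · exact h
    · simp at hK
  | K :: Ms, H, h => by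
    refine foldl_le_normal N Ms ⁅H, K⁆ ?_
    rcases h with h | ⟨K', hK', hK'N⟩
    · exact Or.inl (le_trans (Subgroup.commutator_mono h le_top)
        (Subgroup.commutator_le_left N ⊤))
    · rcases List.mem_cons.mp hK' with rfl | hmem
      · exact Or.inl (le_trans (Subgroup.commutator_mono le_top hK'N)
          (Subgroup.commutator_le_right ⊤ N))
      · exact Or.inr ⟨K', hmem, hK'N⟩

end MooreAux

namespace MooreAux

section Specific

variable (n : ℕ) (J : Type)

/-- The retraction of the free group killing all generators tagged by `m`. -/
def rho (m : ℕ) : FreeGp n J →* FreeGp n J :=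
  FreeGroup.lift fun q =>
    if m = q.1.1.1 ∨ m = q.1.1.2 then 1 else FreeGroup.of q

/-- The normal closure of all generators tagged by `m`. -/
def Nsub (m : ℕ) : Subgroup (FreeGp n J) :=
  ⨆ (p : PairIdx (n + 1)) (_ : m = p.1.1 ∨ m = p.1.2), Rpair n J p

variable {n J}

theorem rho_of_tag {m : ℕ} {p : PairIdx (n + 1)} (h : m = p.1.1 ∨ m = p.1.2) (α : J) :
    rho n J m (FreeGroup.of (p, α)) = 1 := by
  simp [rho, FreeGroup.lift_apply_of, h]

theorem rho_of_notag {m : ℕ} {p : PairIdx (n + 1)} (h : ¬(m = p.1.1 ∨ m = p.1.2)) (α : J) :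
    rho n J m (FreeGroup.of (p, α)) = FreeGroup.of (p, α) := by
  simp only [rho, FreeGroup.lift_apply_of, if_neg h]

theorem rho_rho (m : ℕ) (w : FreeGp n J) : rho n J m (rho n J m w) = rho n J m w := by
  have : (rho n J m).comp (rho n J m) = rho n J m := by
    apply FreeGroup.ext_hom
    rintro ⟨p, α⟩
    by_cases h : m = p.1.1 ∨ m = p.1.2
    · simp [rho_of_tag h]
    · simp [rho_of_notag h]
  exact DFunLike.congr_fun this w

instance Rpair_normal (p : PairIdx (n + 1)) : (Rpair n J p).Normal :=
  Subgroup.normalClosure_normal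

instance Nsub_normal (m : ℕ) : (Nsub n J m).Normal :=
  normal_iSup _ fun p => normal_iSup _ fun _ => Rpair_normal p

theorem Rpair_le_Nsub {m : ℕ} {p : PairIdx (n + 1)} (h : m = p.1.1 ∨ m = p.1.2) :
    Rpair n J p ≤ Nsub n J m :=
  le_iSup₂ (f := fun p (_ : m = p.1.1 ∨ m = p.1.2) => Rpair n J p) p h

theorem of_mem_Rpair (p : PairIdx (n + 1)) (α : J) : FreeGroup.of (p, α) ∈ Rpair n J p :=
  Subgroup.subset_normalClosure ⟨α, rfl⟩

theorem ker_rho (m : ℕ) : (rho n J m).ker = Nsub n J m := by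
  apply le_antisymm
  · have hcomp : (QuotientGroup.mk' (Nsub n J m)).comp (rho n J m) =
        QuotientGroup.mk' (Nsub n J m) := by
      apply FreeGroup.ext_hom
      rintro ⟨p, α⟩
      by_cases h : m = p.1.1 ∨ m = p.1.2
      · simp only [MonoidHom.comp_apply, rho_of_tag h, map_one, QuotientGroup.mk'_apply]
        exact ((QuotientGroup.eq_one_iff _).mpr (Rpair_le_Nsub h (of_mem_Rpair p α))).symm
      · simp [rho_of_notag h]
    intro w hw
    rw [MonoidHom.mem_ker] at hw
    have h1 := DFunLike.congr_fun hcomp w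
    rw [MonoidHom.comp_apply, hw, map_one] at h1
    exact (QuotientGroup.eq_one_iff _).mp (by simpa using h1.symm)
  · refine iSup_le fun p => iSup_le fun hp => ?_
    refine Subgroup.normalClosure_le_normal ?_
    rintro x ⟨α, rfl⟩
    simp [MonoidHom.mem_ker, rho_of_tag hp]

end Specific

end MooreAux

namespace MooreAux

section Lists

variable {n : ℕ} {J : Type}

theorem mem_pairsUnion {m : ℕ} {L : List (PairIdx m)} {k : ℕ} :
    k ∈ pairsUnion L ↔ ∃ p ∈ L, k = p.1.1 ∨ k = p.1.2 := Iff.rfl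

theorem pairsUnion_append {m : ℕ} (L M : List (PairIdx m)) :
    pairsUnion (L ++ M) = pairsUnion L ∪ pairsUnion M := by
  ext k
  simp [pairsUnion, List.mem_append, or_and_right, exists_or]

/-- Abbreviation for the iterated commutator of the `Rpair`s along a list. -/
def iterC (n : ℕ) (J : Type) (L : List (PairIdx (n + 1))) : Subgroup (FreeGp n J) :=
  iteratedCommutator (L.map (Rpair n J))

theorem iterC_singleton (q : PairIdx (n + 1)) : iterC n J [q] = Rpair n J q := rfl

theorem iterC_append_singleton {L : List (PairIdx (n + 1))} (hL : L ≠ []) (q : PairIdx (n + 1)) :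
    iterC n J (L ++ [q]) = ⁅iterC n J L, Rpair n J q⁆ := by
  obtain ⟨a, L', rfl⟩ : ∃ a L', L = a :: L' := by
    cases L with
    | nil => exact absurd rfl hL
    | cons a L' => exact ⟨a, L', rfl⟩
  simp [iterC, iteratedCommutator, List.foldl_append]

instance iterC_normal (L : List (PairIdx (n + 1))) : (iterC n J L).Normal := by
  cases L with
  | nil =>
    constructor
    intro a ha g
    simp only [iterC, List.map_nil, iteratedCommutator, Subgroup.mem_bot] at ha ⊢
    simp [ha]
  | cons a L' =>
    exact foldl_commutator_normal _ _ (Rpair_normal a)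
      (by rintro K hK; simp only [List.mem_map] at hK; obtain ⟨p, _, rfl⟩ := hK
          exact Rpair_normal p)

instance RT_normal (T : Set ℕ) : (RT n J T).Normal :=
  normal_iSup _ fun L => normal_iSup _ fun _ => normal_iSup _ fun _ => iterC_normal L

theorem iterC_le_RT {L : List (PairIdx (n + 1))} (hL : L ≠ []) {T : Set ℕ}
    (hT : T ⊆ pairsUnion L) : iterC n J L ≤ RT n J T := by
  refine le_trans ?_ (le_iSup _ L)
  refine le_trans ?_ (le_iSup _ hL)
  exact le_iSup (fun (_ : T ⊆ pairsUnion L) => iterC n J L) hT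

theorem RT_le {T : Set ℕ} {K : Subgroup (FreeGp n J)}
    (h : ∀ L : List (PairIdx (n + 1)), L ≠ [] → T ⊆ pairsUnion L → iterC n J L ≤ K) :
    RT n J T ≤ K :=
  iSup_le fun L => iSup_le fun hL => iSup_le fun hT => h L hL hT

theorem RT_antitone {T₁ T₂ : Set ℕ} (h : T₁ ⊆ T₂) : RT n J T₂ ≤ RT n J T₁ :=
  RT_le fun _L hL hT => iterC_le_RT hL (le_trans h hT)

theorem mem_pairsUnion_left {m : ℕ} {L : List (PairIdx m)} {p : PairIdx m} (hp : p ∈ L) :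
    (p.1.1 ∈ pairsUnion L) ∧ (p.1.2 ∈ pairsUnion L) :=
  ⟨⟨p, hp, Or.inl rfl⟩, ⟨p, hp, Or.inr rfl⟩⟩

/-- Commuting an `RT` with a single `Rpair`. -/
theorem commutator_RT_Rpair (T : Set ℕ) (q : PairIdx (n + 1)) :
    ⁅RT n J T, Rpair n J q⁆ ≤ RT n J (T ∪ {k | k = q.1.1 ∨ k = q.1.2}) := by
  refine commutator_iSup_left_le _ _ _ fun L => ?_
  refine commutator_iSup_left_le _ _ _ fun hL => ?_
  refine commutator_iSup_left_le _ _ _ fun hT => ?_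
  show ⁅iterC n J L, Rpair n J q⁆ ≤ _
  rw [← iterC_append_singleton hL q]
  refine iterC_le_RT (by simp) ?_
  rw [pairsUnion_append]
  rintro k (hk | hk)
  · exact Or.inl (hT hk)
  · rcases hk with hk | hk
    · exact Or.inr ⟨q, by simp, Or.inl hk⟩
    · exact Or.inr ⟨q, by simp, Or.inr hk⟩

end Lists

end MooreAux

namespace MooreAux

section Main

variable {n : ℕ} {J : Type}

theorem rho_mem_Rpair {m : ℕ} (p : PairIdx (n + 1)) {w : FreeGp n J}
    (hw : w ∈ Rpair n J p) : rho n J m w ∈ Rpair n J p := by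
  have h : Rpair n J p ≤ Subgroup.comap (rho n J m) (Rpair n J p) := by
    haveI : (Subgroup.comap (rho n J m) (Rpair n J p)).Normal :=
      Subgroup.Normal.comap (Rpair_normal p) _
    refine Subgroup.normalClosure_le_normal ?_
    rintro x ⟨α, rfl⟩
    show FreeGroup.of (p, α) ∈ Subgroup.comap (rho n J m) (Rpair n J p)
    by_cases h : m = p.1.1 ∨ m = p.1.2
    · simp only [Subgroup.mem_comap, rho_of_tag h]
      exact one_mem _
    · simp only [Subgroup.mem_comap, rho_of_notag h]
      exact of_mem_Rpair p α
  exact h hw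

theorem foldl_rho_mem {m : ℕ} :
    ∀ (Ms : List (PairIdx (n + 1))) (H : Subgroup (FreeGp n J)),
      (∀ w ∈ H, rho n J m w ∈ H) →
      ∀ w ∈ (Ms.map (Rpair n J)).foldl (fun A B => ⁅A, B⁆) H, rho n J m w ∈
        (Ms.map (Rpair n J)).foldl (fun A B => ⁅A, B⁆) H
  | [], _, hH => hH
  | q :: Ms, H, hH => by
    refine foldl_rho_mem Ms ⁅H, Rpair n J q⁆ ?_
    intro w hw
    have hle : ⁅H, Rpair n J q⁆ ≤ Subgroup.comap (rho n J m) ⁅H, Rpair n J q⁆ := by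
      rw [Subgroup.commutator_le]
      intro a ha b hb
      rw [Subgroup.mem_comap, map_commutatorElement]
      exact Subgroup.commutator_mem_commutator (hH a ha) (rho_mem_Rpair q hb)
    exact hle hw

theorem rho_mem_iterC {m : ℕ} {L : List (PairIdx (n + 1))} {w : FreeGp n J}
    (hw : w ∈ iterC n J L) : rho n J m w ∈ iterC n J L := by
  cases L with
  | nil =>
    simp only [iterC, List.map_nil, iteratedCommutator, Subgroup.mem_bot] at hw ⊢
    simp [hw]
  | cons a L' =>
    exact foldl_rho_mem L' (Rpair n J a) (fun w' hw' => rho_mem_Rpair a hw') w hw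

theorem pairsUnion_singleton (q : PairIdx (n + 1)) :
    pairsUnion [q] = {k | k = q.1.1 ∨ k = q.1.2} := by
  ext k; simp [pairsUnion]

/-- The bracket of two iterated commutators lies in the join of left-normed ones. -/
theorem bracket_iterC_le (M : List (PairIdx (n + 1))) :
    ∀ L : List (PairIdx (n + 1)), L ≠ [] →
      ⁅iterC n J L, iterC n J M⁆ ≤ RT n J (pairsUnion L ∪ pairsUnion M) := by
  induction M using List.reverseRecOn with
  | nil =>
    intro L _
    have hbot : iterC n J ([] : List (PairIdx (n + 1))) = ⊥ := rfl
    rw [hbot, Subgroup.commutator_bot_right]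
    exact bot_le
  | append_singleton M' q ih =>
    intro L hL
    by_cases hM' : M' = []
    · subst hM'
      simp only [List.nil_append]
      show ⁅iterC n J L, Rpair n J q⁆ ≤ _
      rw [← iterC_append_singleton hL q]
      exact iterC_le_RT (by simp) (le_of_eq (pairsUnion_append L [q]).symm)
    · rw [iterC_append_singleton hM' q, Subgroup.commutator_comm]
      refine three_subgroups_le _ _ _ _ ?_ ?_
      · -- ⁅⁅Rpair q, iterC L⁆, iterC M'⁆ ≤ _
        rw [Subgroup.commutator_comm (Rpair n J q) (iterC n J L),
          ← iterC_append_singleton hL q]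
        refine le_trans (ih (L ++ [q]) (by simp)) (RT_antitone ?_)
        rw [pairsUnion_append, pairsUnion_append]
        intro k hk
        simp only [Set.mem_union] at hk ⊢
        tauto
      · -- ⁅⁅iterC L, iterC M'⁆, Rpair q⁆ ≤ _
        refine le_trans (Subgroup.commutator_mono (ih L hL) le_rfl) ?_
        refine le_trans (commutator_RT_Rpair _ q) (RT_antitone ?_)
        rw [pairsUnion_append, pairsUnion_singleton]
        intro k hk
        simp only [Set.mem_union, Set.mem_setOf_eq] at hk ⊢
        tauto

theorem commutator_iterC_RT_le {L : List (PairIdx (n + 1))} (hL : L ≠ []) (S : Set ℕ) :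
    ⁅iterC n J L, RT n J S⁆ ≤ RT n J (pairsUnion L ∪ S) := by
  refine commutator_iSup_right_le _ _ _ fun N => ?_
  refine commutator_iSup_right_le _ _ _ fun hN => ?_
  refine commutator_iSup_right_le _ _ _ fun hcov => ?_
  refine le_trans (bracket_iterC_le N L hL) (RT_antitone ?_)
  intro k hk
  rcases hk with hk | hk
  · exact Or.inl hk
  · exact Or.inr (hcov hk)

end Main

end MooreAux

namespace MooreAux

section Decomp

variable {G : Type*} [Group G]

/-- The subgroup of elements whose "difference" from their image under `φ` lies in `M`. -/
def diffSub (φ : G →* G) (M : Subgroup G) (hM : M.Normal) : Subgroup G where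
  carrier := {w | w * (φ w)⁻¹ ∈ M}
  one_mem' := by simpa using one_mem M
  mul_mem' := by
    intro a b ha hb
    simp only [Set.mem_setOf_eq] at *
    have h : a * b * (φ (a * b))⁻¹ = a * (b * (φ b)⁻¹) * a⁻¹ * (a * (φ a)⁻¹) := by
      rw [map_mul]; group
    rw [h]
    exact mul_mem (hM.conj_mem _ hb a) ha
  inv_mem' := by
    intro a ha
    simp only [Set.mem_setOf_eq] at *
    have h : a⁻¹ * (φ a⁻¹)⁻¹ = a⁻¹ * (a * (φ a)⁻¹)⁻¹ * a⁻¹⁻¹ := by rw [map_inv]; group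
    rw [h]
    exact hM.conj_mem _ (inv_mem ha) a⁻¹

theorem mem_diffSub {φ : G →* G} {M : Subgroup G} {hM : M.Normal} {w : G} :
    w ∈ diffSub φ M hM ↔ w * (φ w)⁻¹ ∈ M := Iff.rfl

variable {n : ℕ} {J : Type}

theorem commutator_Rpair_Nsub (q : PairIdx (n + 1)) (m : ℕ) :
    ⁅Rpair n J q, Nsub n J m⁆ ≤ RT n J (pairsUnion [q] ∪ {m}) := by
  refine commutator_iSup_right_le _ _ _ fun r => ?_
  refine commutator_iSup_right_le _ _ _ fun hr => ?_
  have h2 : ⁅Rpair n J q, Rpair n J r⁆ = iterC n J [q, r] := by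
    simp [iterC, iteratedCommutator]
  rw [h2]
  refine iterC_le_RT (by simp) ?_
  rintro k (hk | hk)
  · rw [pairsUnion_singleton] at hk
    rcases hk with hk | hk
    · exact ⟨q, by simp, Or.inl hk⟩
    · exact ⟨q, by simp, Or.inr hk⟩
  · rw [Set.mem_singleton_iff] at hk
    subst hk
    exact ⟨r, by simp, hr⟩

theorem decomp_single (m : ℕ) (q : PairIdx (n + 1)) :
    Rpair n J q ≤ diffSub (rho n J m) (RT n J (pairsUnion [q] ∪ {m})) (RT_normal _) := by
  by_cases htag : m = q.1.1 ∨ m = q.1.2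
  · intro w hw
    rw [mem_diffSub]
    have h1 : rho n J m w = 1 := by
      have hle : Rpair n J q ≤ (rho n J m).ker := le_of_le_of_eq (Rpair_le_Nsub htag) (ker_rho m).symm
      exact hle hw
    rw [h1, inv_one, mul_one]
    refine iterC_le_RT (L := [q]) (by simp) ?_ hw
    rintro k (hk | hk)
    · exact hk
    · rw [Set.mem_singleton_iff] at hk
      subst hk
      exact ⟨q, by simp, htag⟩
  · show Subgroup.normalClosure _ ≤ _
    rw [Subgroup.normalClosure]
    rw [Subgroup.closure_le]
    intro c hc
    rw [Group.mem_conjugatesOfSet_iff] at hc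
    obtain ⟨x, ⟨α, rfl⟩, hconj⟩ := hc
    rw [isConj_iff] at hconj
    obtain ⟨g, rfl⟩ := hconj
    show _ ∈ diffSub (rho n J m) (RT n J (pairsUnion [q] ∪ {m})) (RT_normal _)
    rw [mem_diffSub]
    have hu : rho n J m g * g⁻¹ ∈ Nsub n J m := by
      rw [← ker_rho m, MonoidHom.mem_ker, map_mul, map_inv, rho_rho]
      simp
    have hcmem : g * FreeGroup.of (q, α) * g⁻¹ ∈ Rpair n J q :=
      (Rpair_normal q).conj_mem _ (of_mem_Rpair q α) g
    have hid : (g * FreeGroup.of (q, α) * g⁻¹) *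
        (rho n J m (g * FreeGroup.of (q, α) * g⁻¹))⁻¹ =
        ⁅g * FreeGroup.of (q, α) * g⁻¹, rho n J m g * g⁻¹⁆ := by
      simp only [map_mul, map_inv, rho_of_notag htag, commutatorElement_def]
      group
    rw [hid]
    exact commutator_Rpair_Nsub q m (Subgroup.commutator_mem_commutator hcmem hu)

theorem decomp (m : ℕ) (L : List (PairIdx (n + 1))) (hL : L ≠ []) :
    iterC n J L ≤
      diffSub (rho n J m) (RT n J (pairsUnion L ∪ {m})) (RT_normal _) := by
  induction L using List.reverseRecOn with
  | nil => exact absurd rfl hL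
  | append_singleton L' q ih =>
    by_cases hL' : L' = []
    · subst hL'
      simp only [List.nil_append]
      exact decomp_single m q
    · rw [iterC_append_singleton hL' q, Subgroup.commutator_le]
      intro a ha b hb
      set M : Subgroup (FreeGp n J) := RT n J (pairsUnion (L' ++ [q]) ∪ {m}) with hM
      by_cases htag : m = q.1.1 ∨ m = q.1.2
      · have hb1 : rho n J m b = 1 := by
          have hle : Rpair n J q ≤ (rho n J m).ker :=
            le_of_le_of_eq (Rpair_le_Nsub htag) (ker_rho m).symm
          exact hle hb
        rw [mem_diffSub, map_commutatorElement, hb1]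
        have h1 : ⁅rho n J m a, (1 : FreeGp n J)⁆ = 1 := by
          simp [commutatorElement_def]
        rw [h1, inv_one, mul_one]
        have hab : ⁅a, b⁆ ∈ iterC n J (L' ++ [q]) := by
          rw [iterC_append_singleton hL' q]
          exact Subgroup.commutator_mem_commutator ha hb
        refine iterC_le_RT (by simp) ?_ hab
        rintro k (hk | hk)
        · exact hk
        · rw [Set.mem_singleton_iff] at hk
          subst hk
          exact ⟨q, by simp, htag⟩
      · -- main case
        have hfa : rho n J m a ∈ iterC n J L' := rho_mem_iterC ha
        have hfb : rho n J m b ∈ Rpair n J q := rho_mem_Rpair q hb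
        have heJ : a * (rho n J m a)⁻¹ ∈ RT n J (pairsUnion L' ∪ {m}) := ih hL' ha
        have hfJ : b * (rho n J m b)⁻¹ ∈ RT n J (pairsUnion [q] ∪ {m}) :=
          decomp_single m q hb
        haveI : M.Normal := RT_normal _
        have hsub1 : pairsUnion (L' ++ [q]) ∪ {m} ⊆ (pairsUnion L' ∪ {m}) ∪ pairsUnion [q] := by
          rw [pairsUnion_append]
          intro k hk
          simp only [Set.mem_union] at hk ⊢
          tauto
        have F1 : ⁅RT n J (pairsUnion L' ∪ {m}), Rpair n J q⁆ ≤ M := by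
          refine le_trans (commutator_RT_Rpair _ q) (RT_antitone ?_)
          rw [← pairsUnion_singleton]
          exact hsub1
        have F2 : ⁅iterC n J L', RT n J (pairsUnion [q] ∪ {m})⁆ ≤ M := by
          refine le_trans (commutator_iterC_RT_le hL' _) (RT_antitone ?_)
          rw [pairsUnion_append]
          intro k hk
          simp only [Set.mem_union] at hk ⊢
          tauto
        have F3 : ⁅iterC n J (L' ++ [q]), RT n J (pairsUnion L' ∪ {m})⁆ ≤ M := by
          refine le_trans (commutator_iterC_RT_le (by simp) _) (RT_antitone ?_)
          rw [pairsUnion_append]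
          intro k hk
          simp only [Set.mem_union, pairsUnion_append] at hk ⊢
          tauto
        have F4 : ⁅iterC n J (L' ++ [q]), RT n J (pairsUnion [q] ∪ {m})⁆ ≤ M := by
          refine le_trans (commutator_iterC_RT_le (by simp) _) (RT_antitone ?_)
          intro k hk
          simp only [Set.mem_union, pairsUnion_append] at hk ⊢
          tauto
        have F5 : ⁅RT n J (pairsUnion L' ∪ {m}), RT n J (pairsUnion [q] ∪ {m})⁆ ≤ M := by
          refine commutator_iSup_left_le _ _ _ fun N => ?_
          refine commutator_iSup_left_le _ _ _ fun hN => ?_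
          refine commutator_iSup_left_le _ _ _ fun hcov => ?_
          refine le_trans (commutator_iterC_RT_le hN _) (RT_antitone ?_)
          intro k hk
          rw [pairsUnion_append] at hk
          rcases hk with (hk | hk) | hk
          · exact Or.inl (hcov (Or.inl hk))
          · exact Or.inr (Or.inl hk)
          · exact Or.inr (Or.inr hk)
        have hab : ⁅a, b⁆ ∈ iterC n J (L' ++ [q]) := by
          rw [iterC_append_singleton hL' q]
          exact Subgroup.commutator_mem_commutator ha hb
        have cEB : Commute ((a * (rho n J m a)⁻¹ : FreeGp n J) : FreeGp n J ⧸ M)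
            ((b : FreeGp n J) : FreeGp n J ⧸ M) := commute_mk F1 heJ hb
        have cFA : Commute ((b * (rho n J m b)⁻¹ : FreeGp n J) : FreeGp n J ⧸ M)
            ((a : FreeGp n J) : FreeGp n J ⧸ M) := (commute_mk F2 ha hfJ).symm
        have cEF : Commute ((a * (rho n J m a)⁻¹ : FreeGp n J) : FreeGp n J ⧸ M)
            ((b * (rho n J m b)⁻¹ : FreeGp n J) : FreeGp n J ⧸ M) :=
          commute_mk F5 heJ hfJ
        have cCE : Commute ((⁅a, b⁆ : FreeGp n J) : FreeGp n J ⧸ M)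
            ((a * (rho n J m a)⁻¹ : FreeGp n J) : FreeGp n J ⧸ M) := commute_mk F3 hab heJ
        have cCF : Commute ((⁅a, b⁆ : FreeGp n J) : FreeGp n J ⧸ M)
            ((b * (rho n J m b)⁻¹ : FreeGp n J) : FreeGp n J ⧸ M) := commute_mk F4 hab hfJ
        rw [mem_diffSub, ← QuotientGroup.eq_one_iff]
        set ea := a * (rho n J m a)⁻¹ with hea
        set fb := b * (rho n J m b)⁻¹ with hfb2
        have hra : rho n J m a = ea⁻¹ * a := by rw [hea]; group
        have hrb : rho n J m b = fb⁻¹ * b := by rw [hfb2]; group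
        have hcoe : ∀ x y : FreeGp n J,
            ((⁅x, y⁆ : FreeGp n J) : FreeGp n J ⧸ M) =
              ⁅(x : FreeGp n J ⧸ M), (y : FreeGp n J ⧸ M)⁆ := by
          intro x y
          exact map_commutatorElement (QuotientGroup.mk' M) x y
        have cEB' := commute_mk F1 heJ hb
        have cFA' := (commute_mk F2 ha hfJ).symm
        have cEF' := commute_mk F5 heJ hfJ
        have cCE' := commute_mk F3 hab heJ
        have cCF' := commute_mk F4 hab hfJ
        rw [hcoe] at cCE' cCF'
        rw [map_commutatorElement, hra, hrb]
        simp only [QuotientGroup.mk_mul, QuotientGroup.mk_inv, hcoe]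
        rw [key_identity _ _ _ _ cEB' cFA' cEF' cCE' cCF', mul_inv_cancel]

end Decomp

end MooreAux

namespace MooreAux

section Assemble

variable {n : ℕ} {J : Type}

theorem RT_empty : RT n J (∅ : Set ℕ) = ⊤ := by
  rw [eq_top_iff]
  intro w hw
  clear hw
  induction w using FreeGroup.induction_on with
  | C1 => exact one_mem _
  | of x =>
    exact iterC_le_RT (L := [x.1]) (by simp) (by simp)
      (show _ ∈ Rpair n J x.1 from of_mem_Rpair x.1 x.2)
  | inv_of x hx => exact inv_mem hx
  | mul x y hx hy => exact mul_mem hx hy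

theorem inter_Nsub_le_RT (T : Finset ℕ) (w : FreeGp n J)
    (hw : ∀ m ∈ T, w ∈ Nsub n J m) : w ∈ RT n J (T : Set ℕ) := by
  induction T using Finset.induction_on generalizing w with
  | empty => rw [Finset.coe_empty, RT_empty]; trivial
  | @insert m T hm ih =>
    have hwT : w ∈ RT n J (T : Set ℕ) :=
      ih w (fun m' hm' => hw m' (Finset.mem_insert_of_mem hm'))
    have hker : rho n J m w = 1 := by
      have h1 := hw m (Finset.mem_insert_self m T)
      rw [← ker_rho m] at h1
      exact h1
    have hK : RT n J (T : Set ℕ) ≤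
        diffSub (rho n J m) (RT n J ((T : Set ℕ) ∪ {m})) (RT_normal _) := by
      refine RT_le fun L hL hTL => le_trans (decomp m L hL) ?_
      intro x hx
      rw [mem_diffSub] at hx ⊢
      exact RT_antitone (Set.union_subset_union_left {m} hTL) hx
    have hmem := hK hwT
    rw [mem_diffSub, hker, inv_one, mul_one] at hmem
    have hset : ((insert m T : Finset ℕ) : Set ℕ) = (T : Set ℕ) ∪ {m} := by
      rw [Finset.coe_insert, Set.insert_eq, Set.union_comm]
    rw [hset]
    exact hmem

/-- The inverse of the "delete index `t+1`" reindexing on pairs. -/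
def iota (t : Fin (n + 1)) (q : PairIdx n) : PairIdx (n + 1) :=
  ⟨((if q.1.1 < (t : ℕ) + 1 then q.1.1 else q.1.1 + 1),
    (if q.1.2 < (t : ℕ) + 1 then q.1.2 else q.1.2 + 1)), by
      have h := q.2
      have ht := t.isLt
      refine ⟨?_, ?_, ?_⟩ <;> dsimp only <;> split_ifs <;> omega⟩

theorem iota_val (t : Fin (n + 1)) (q : PairIdx n) :
    (iota t q : ℕ × ℕ) = ((if q.1.1 < (t : ℕ) + 1 then q.1.1 else q.1.1 + 1),
      (if q.1.2 < (t : ℕ) + 1 then q.1.2 else q.1.2 + 1)) := rfl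

theorem ker_faceMap (t : Fin (n + 1)) :
    (faceMap n J t).ker = Nsub n J ((t : ℕ) + 1) := by
  apply le_antisymm
  · set N := Nsub n J ((t : ℕ) + 1) with hN
    haveI hNn : N.Normal := Nsub_normal _
    set s : FreeGroup (PairIdx n × J) →* FreeGp n J ⧸ N :=
      FreeGroup.lift (fun (q : PairIdx n × J) =>
        (QuotientGroup.mk (FreeGroup.of (iota t q.1, q.2)) : FreeGp n J ⧸ N)) with hs
    have key : ∀ (x y : PairIdx (n + 1) × J), x = y →
        ((FreeGroup.of x : FreeGp n J) : FreeGp n J ⧸ N) = ↑(FreeGroup.of y) := by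
      rintro x y rfl; rfl
    have hcomp : s.comp (faceMap n J t) = QuotientGroup.mk' N := by
      apply FreeGroup.ext_hom
      rintro ⟨p, α⟩
      have hp2 := p.2
      have ht := t.isLt
      simp only [MonoidHom.comp_apply, faceMap, FreeGroup.lift_apply_of, QuotientGroup.mk'_apply]
      by_cases h1 : (t : ℕ) + 1 < p.1.1
      · rw [dif_pos h1]
        simp only [hs, FreeGroup.lift_apply_of]
        apply key
        refine Prod.ext_iff.mpr ⟨Subtype.ext_iff.mpr ?_, rfl⟩
        rw [iota_val, Prod.ext_iff]
        constructor <;> dsimp only <;> split_ifs <;> omega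
      · rw [dif_neg h1]
        by_cases h2 : (t : ℕ) + 1 = p.1.1
        · rw [dif_pos h2, map_one]
          exact ((QuotientGroup.eq_one_iff _).mpr
            (Rpair_le_Nsub (Or.inl h2) (of_mem_Rpair p α))).symm
        · rw [dif_neg h2]
          by_cases h3 : (t : ℕ) + 1 < p.1.2
          · rw [dif_pos h3]
            simp only [hs, FreeGroup.lift_apply_of]
            apply key
            refine Prod.ext_iff.mpr ⟨Subtype.ext_iff.mpr ?_, rfl⟩
            rw [iota_val, Prod.ext_iff]
            constructor <;> dsimp only <;> split_ifs <;> omega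
          · rw [dif_neg h3]
            by_cases h4 : (t : ℕ) + 1 = p.1.2
            · rw [dif_pos h4, map_one]
              exact ((QuotientGroup.eq_one_iff _).mpr
                (Rpair_le_Nsub (Or.inr h4) (of_mem_Rpair p α))).symm
            · rw [dif_neg h4]
              simp only [hs, FreeGroup.lift_apply_of]
              apply key
              refine Prod.ext_iff.mpr ⟨Subtype.ext_iff.mpr ?_, rfl⟩
              rw [iota_val, Prod.ext_iff]
              constructor <;> dsimp only <;> split_ifs <;> omega
    intro w hw
    rw [MonoidHom.mem_ker] at hw
    have h1 := DFunLike.congr_fun hcomp w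
    rw [MonoidHom.comp_apply, hw, map_one] at h1
    exact (QuotientGroup.eq_one_iff _).mp (by simpa using h1.symm)
  · refine iSup_le fun p => iSup_le fun hp => Subgroup.normalClosure_le_normal ?_
    rintro x ⟨α, rfl⟩
    show FreeGroup.of (p, α) ∈ (faceMap n J t).ker
    rw [MonoidHom.mem_ker]
    have hp2 := p.2
    simp only [faceMap, FreeGroup.lift_apply_of]
    rcases hp with hp | hp
    · rw [dif_neg (by omega), dif_pos hp]
    · rw [dif_neg (by omega), dif_neg (by omega), dif_neg (by omega), dif_pos hp]

end Assemble

end MooreAux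

/-- The Moore chain subgroup `⋂_{k=1}^{n} ker(d_k : G_n^{*J} → G_{n-1}^{*J})` equals
`R[{2, 3, …, n+1}]`. -/
theorem mooreChains_eq_RT (n : ℕ) (hn : 1 ≤ n) (J : Type) :
    (⨅ k : Fin n, MonoidHom.ker (faceMap n J k.succ)) = RT n J (Set.Icc 2 (n + 1)) := by
  apply le_antisymm
  · intro w hw
    rw [Subgroup.mem_iInf] at hw
    have key : ∀ m ∈ Finset.Icc 2 (n + 1), w ∈ MooreAux.Nsub n J m := by
      intro m hm
      rw [Finset.mem_Icc] at hm
      have hk : m - 2 < n := by omega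
      have h1 := hw ⟨m - 2, hk⟩
      rw [MooreAux.ker_faceMap] at h1
      have hm2 : ((Fin.succ ⟨m - 2, hk⟩ : Fin (n + 1)) : ℕ) + 1 = m := by
        rw [Fin.val_succ]
        show m - 2 + 1 + 1 = m
        omega
      rwa [hm2] at h1
    have h2 := MooreAux.inter_Nsub_le_RT (Finset.Icc 2 (n + 1)) w key
    rwa [Finset.coe_Icc] at h2
  · refine MooreAux.RT_le fun L hL hT => le_iInf fun k => ?_
    rw [MooreAux.ker_faceMap]
    have hmem : ((Fin.succ k : Fin (n + 1)) : ℕ) + 1 ∈ Set.Icc 2 (n + 1) := by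
      rw [Fin.val_succ]
      have := k.isLt
      constructor <;> omega
    obtain ⟨p, hpL, hptag⟩ := hT hmem
    obtain ⟨a, L', rfl⟩ : ∃ a L', L = a :: L' := by
      cases L with
      | nil => exact absurd rfl hL
      | cons a L' => exact ⟨a, L', rfl⟩
    show (List.map (Rpair n J) L').foldl (fun A B => ⁅A, B⁆) (Rpair n J a) ≤ _
    apply MooreAux.foldl_le_normal
    rcases List.mem_cons.mp hpL with rfl | hpm
    · exact Or.inl (MooreAux.Rpair_le_Nsub hptag)
    · exact Or.inr ⟨Rpair n J p, List.mem_map_of_mem hpm, MooreAux.Rpair_le_Nsub hptag⟩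
end

section
/- Let n ≥ 1 and let J be an index set. In the free group G_n^{*J} with basis {x_{i,j}(α) : 1 ≤ i < j ≤ n+1, α ∈ J}, with face homomorphisms d_t (0 ≤ t ≤ n) defined by the stated formulas, the Moore cycle subgroup ⋂_{k=0}^{n} ker(d_k : G_n^{*J} → G_{n-1}^{*J}) equals R[{1, 2, …, n+1}], i.e., the symmetric commutator subgroup [R_{i,j} | 1 ≤ i < j ≤ n+1]_S. -/
open scoped commutatorElement

/-! ### Generic group-theoretic helpers -/

section Helpers
variable {G : Type*} [Group G]

theorem mynormal_iSup {ι : Sort*} (S : ι → Subgroup G) (h : ∀ i, (S i).Normal) :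
    (⨆ i, S i).Normal := by
  constructor
  intro x hx g
  refine Subgroup.iSup_induction S (C := fun y => g * y * g⁻¹ ∈ ⨆ i, S i) hx
    (fun i y hy => Subgroup.mem_iSup_of_mem i ((h i).conj_mem y hy g))
    (by simpa using (⨆ i, S i).one_mem) ?_
  intro a b ha hb
  have hab : g * (a * b) * g⁻¹ = (g * a * g⁻¹) * (g * b * g⁻¹) := by group
  rw [hab]; exact mul_mem ha hb

theorem mycommutator_iSup_le_left {ι : Sort*} (S : ι → Subgroup G) (B N : Subgroup G) [N.Normal]
    (h : ∀ i, ⁅S i, B⁆ ≤ N) : ⁅⨆ i, S i, B⁆ ≤ N := by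
  rw [Subgroup.commutator_le]
  intro a ha b hb
  refine Subgroup.iSup_induction S (C := fun a => ⁅a, b⁆ ∈ N) ha
    (fun i y hy => h i (Subgroup.commutator_mem_commutator hy hb)) ?_ ?_
  · have h1 : ⁅(1 : G), b⁆ = 1 := by group
    show ⁅(1 : G), b⁆ ∈ N
    rw [h1]; exact N.one_mem
  · intro x y hx hy
    have hxy : ⁅x * y, b⁆ = (x * ⁅y, b⁆ * x⁻¹) * ⁅x, b⁆ := by group
    show ⁅x * y, b⁆ ∈ N
    rw [hxy]
    exact N.mul_mem (‹N.Normal›.conj_mem _ hy x) hx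

theorem mycommutator_le_of_left (A B N : Subgroup G) [N.Normal] (h : A ≤ N) : ⁅A, B⁆ ≤ N := by
  rw [Subgroup.commutator_le]
  intro a ha b _
  have hab : ⁅a, b⁆ = a * (b * a⁻¹ * b⁻¹) := by group
  rw [hab]
  exact N.mul_mem (h ha) (‹N.Normal›.conj_mem _ (N.inv_mem (h ha)) b)

theorem mycommutator_le_of_right (A B N : Subgroup G) [N.Normal] (h : B ≤ N) : ⁅A, B⁆ ≤ N := by
  rw [Subgroup.commutator_comm]
  exact mycommutator_le_of_left B A N h

theorem mycommutator_iSup_le_right {ι : Sort*} (A : Subgroup G) (S : ι → Subgroup G)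
    (N : Subgroup G) [N.Normal] (h : ∀ i, ⁅A, S i⁆ ≤ N) : ⁅A, ⨆ i, S i⁆ ≤ N := by
  rw [Subgroup.commutator_comm]
  exact mycommutator_iSup_le_left S A N fun i => (Subgroup.commutator_comm _ _).le.trans (h i)

theorem mythree_subgroups {X Y Z N : Subgroup G} [N.Normal]
    (h1 : ⁅⁅Y, Z⁆, X⁆ ≤ N) (h2 : ⁅⁅Z, X⁆, Y⁆ ≤ N) : ⁅⁅X, Y⁆, Z⁆ ≤ N := by
  rw [Subgroup.commutator_le]
  intro w hw z hz
  rw [Subgroup.commutator_def] at hw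
  induction hw using Subgroup.closure_induction with
  | mem w hw =>
    obtain ⟨x, hx, y, hy, rfl⟩ := hw
    have hid : ⁅⁅x,y⁆,z⁆ =
        x * ((y * ⁅x⁻¹, ⁅y⁻¹, z⁆⁆ * y⁻¹) * (z * ⁅y, ⁅z⁻¹, x⁻¹⁆⁆ * z⁻¹)) * x⁻¹ := by group
    rw [hid]
    refine ‹N.Normal›.conj_mem _
      (N.mul_mem (‹N.Normal›.conj_mem _ ?_ y) (‹N.Normal›.conj_mem _ ?_ z)) x
    · have h3 : ⁅x⁻¹, ⁅y⁻¹, z⁆⁆ = ⁅⁅y⁻¹, z⁆, x⁻¹⁆⁻¹ := by group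
      rw [h3]
      exact N.inv_mem (h1 (Subgroup.commutator_mem_commutator
        (Subgroup.commutator_mem_commutator (Y.inv_mem hy) hz) (X.inv_mem hx)))
    · have h3 : ⁅y, ⁅z⁻¹, x⁻¹⁆⁆ = ⁅⁅z⁻¹, x⁻¹⁆, y⁆⁻¹ := by group
      rw [h3]
      exact N.inv_mem (h2 (Subgroup.commutator_mem_commutator
        (Subgroup.commutator_mem_commutator (Z.inv_mem hz) (X.inv_mem hx)) hy))
  | one =>
    have h1' : ⁅(1 : G), z⁆ = 1 := by group
    show ⁅(1 : G), z⁆ ∈ N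
    rw [h1']; exact N.one_mem
  | mul a b _ _ iha ihb =>
    have hab : ⁅a * b, z⁆ = (a * ⁅b, z⁆ * a⁻¹) * ⁅a, z⁆ := by group
    show ⁅a * b, z⁆ ∈ N
    rw [hab]; exact N.mul_mem (‹N.Normal›.conj_mem _ ihb a) iha
  | inv a _ iha =>
    have hai : ⁅a⁻¹, z⁆ = a⁻¹ * ⁅a, z⁆⁻¹ * a := by group
    show ⁅a⁻¹, z⁆ ∈ N
    rw [hai]
    simpa using (‹N.Normal›.conj_mem _ (N.inv_mem iha) a⁻¹)

theorem conj_comm_aux (e x v : G) (h : Commute e v) : ⁅e⁻¹ * x, v⁆ = e⁻¹ * ⁅x, v⁆ * e := by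
  simp only [commutatorElement_def, mul_inv_rev, inv_inv, mul_assoc]
  rw [h.inv_right.eq]

theorem mul_right_commutator (x y d : G) (h : Commute x d) : ⁅x, y * d⁆ = ⁅x, y⁆ := by
  have hd : ∀ w, d * (x⁻¹ * w) = x⁻¹ * (d * w) := fun w => by
    rw [← mul_assoc, ← (h.inv_left.eq), mul_assoc]
  simp only [commutatorElement_def, mul_inv_rev, mul_assoc, hd, mul_inv_cancel_left]

theorem comm_conj_calc (x y e d : G) (h1 : Commute e y) (h2 : Commute e d)
    (h3 : Commute x d) (h4 : Commute e ⁅x, y⁆) : ⁅e⁻¹ * x, y * d⁆ = ⁅x, y⁆ := by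
  rw [conj_comm_aux e x (y * d) (h1.mul_right h2), mul_right_commutator x y d h3,
    mul_assoc, ← h4.eq, inv_mul_cancel_left]

end Helpers

/-! ### Iterated commutators: basic lemmas -/

section IC
variable {G : Type*} [Group G]

theorem foldl_commutator_normal (L : List (Subgroup G)) (H : Subgroup G) (hH : H.Normal)
    (hL : ∀ K ∈ L, K.Normal) : (L.foldl (fun A B => ⁅A, B⁆) H).Normal := by
  induction L generalizing H with
  | nil => exact hH
  | cons K L ih =>
    simp only [List.foldl_cons]
    haveI := hH
    haveI := hL K (List.mem_cons_self)
    exact ih ⁅H, K⁆ inferInstance fun K' hK' => hL K' (List.mem_cons_of_mem _ hK')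

theorem ic_normal (L : List (Subgroup G)) (hL : ∀ K ∈ L, K.Normal) :
    (iteratedCommutator L).Normal := by
  cases L with
  | nil => show (⊥ : Subgroup G).Normal; infer_instance
  | cons H L =>
    exact foldl_commutator_normal L H (hL H (List.mem_cons_self))
      fun K hK => hL K (List.mem_cons_of_mem _ hK)

theorem ic_append (L : List (Subgroup G)) (H : Subgroup G) (hL : L ≠ []) :
    iteratedCommutator (L ++ [H]) = ⁅iteratedCommutator L, H⁆ := by
  cases L with
  | nil => exact absurd rfl hL
  | cons K L =>
    show (L ++ [H]).foldl (fun A B => ⁅A, B⁆) K = _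
    rw [List.foldl_append]
    rfl

theorem foldl_le (N : Subgroup G) [N.Normal] :
    ∀ (L : List (Subgroup G)) (H : Subgroup G), (H ≤ N ∨ ∃ K ∈ L, K ≤ N) →
      L.foldl (fun A B => ⁅A, B⁆) H ≤ N := by
  intro L
  induction L with
  | nil =>
    intro H h
    rcases h with h | ⟨K, hK, _⟩
    · exact h
    · exact absurd hK (List.not_mem_nil)
  | cons K L ih =>
    intro H h
    simp only [List.foldl_cons]
    apply ih
    rcases h with h | ⟨K', hK', hle⟩
    · exact Or.inl (mycommutator_le_of_left _ _ _ h)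
    · rcases List.mem_cons.mp hK' with rfl | hK'
      · exact Or.inl (mycommutator_le_of_right _ _ _ hle)
      · exact Or.inr ⟨K', hK', hle⟩

theorem ic_le (L : List (Subgroup G)) (N : Subgroup G) [N.Normal]
    (h : ∃ K ∈ L, K ≤ N) (hne : L ≠ []) : iteratedCommutator L ≤ N := by
  cases L with
  | nil => exact absurd rfl hne
  | cons H L =>
    obtain ⟨K, hK, hle⟩ := h
    show L.foldl (fun A B => ⁅A, B⁆) H ≤ N
    apply foldl_le
    rcases List.mem_cons.mp hK with rfl | hK
    · exact Or.inl hle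
    · exact Or.inr ⟨K, hK, hle⟩

end IC

/-! ### `killT`, `Pt` -/

section KillT
variable (n : ℕ) (J : Type)

/-- The endomorphism of the free group killing the generators colored by `t`. -/
def killT (t : ℕ) : FreeGp n J →* FreeGp n J :=
  FreeGroup.lift fun x => if t = x.1.1.1 ∨ t = x.1.1.2 then 1 else FreeGroup.of x

/-- The normal closure of the generators colored by `t`. -/
def Pt (t : ℕ) : Subgroup (FreeGp n J) :=
  Subgroup.normalClosure
    {y | ∃ x : PairIdx (n + 1) × J, (t = x.1.1.1 ∨ t = x.1.1.2) ∧ FreeGroup.of x = y}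

instance Pt_normal (t : ℕ) : (Pt n J t).Normal := Subgroup.normalClosure_normal

instance Rpair_normal (p : PairIdx (n + 1)) : (Rpair n J p).Normal :=
  Subgroup.normalClosure_normal

theorem killT_of (t : ℕ) (x : PairIdx (n + 1) × J) :
    killT n J t (FreeGroup.of x) =
      if t = x.1.1.1 ∨ t = x.1.1.2 then 1 else FreeGroup.of x :=
  FreeGroup.lift_apply_of

theorem killT_killT (t : ℕ) (w : FreeGp n J) :
    killT n J t (killT n J t w) = killT n J t w := by
  have h : (killT n J t).comp (killT n J t) = killT n J t := by
    apply FreeGroup.ext_hom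
    intro a
    simp only [MonoidHom.comp_apply, killT_of]
    split_ifs with ha
    · simp
    · rw [killT_of, if_neg ha]
  exact DFunLike.congr_fun h w

theorem mem_Pt_iff (t : ℕ) (w : FreeGp n J) : w ∈ Pt n J t ↔ killT n J t w = 1 := by
  constructor
  · intro h
    have hle : Pt n J t ≤ (killT n J t).ker := by
      apply Subgroup.normalClosure_le_normal
      rintro y ⟨x, hx, rfl⟩
      simp only [SetLike.mem_coe, MonoidHom.mem_ker, killT_of, if_pos hx]
    exact hle h
  · intro h
    let q := QuotientGroup.mk' (Pt n J t)
    have hq : q.comp (killT n J t) = q := by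
      apply FreeGroup.ext_hom
      intro x
      simp only [MonoidHom.comp_apply, killT_of]
      split_ifs with hx
      · rw [map_one]
        have hmem : FreeGroup.of x ∈ Pt n J t := Subgroup.subset_normalClosure ⟨x, hx, rfl⟩
        exact ((QuotientGroup.eq_one_iff _).mpr hmem).symm
      · rfl
    have hw := DFunLike.congr_fun hq w
    simp only [MonoidHom.comp_apply, h, map_one] at hw
    exact (QuotientGroup.eq_one_iff w).mp hw.symm

theorem killT_mem_Rpair (t : ℕ) (p : PairIdx (n + 1)) {x : FreeGp n J}
    (hx : x ∈ Rpair n J p) : killT n J t x ∈ Rpair n J p := by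
  have hle : Rpair n J p ≤ (Rpair n J p).comap (killT n J t) := by
    haveI : ((Rpair n J p).comap (killT n J t)).Normal :=
      Subgroup.Normal.comap inferInstance _
    apply Subgroup.normalClosure_le_normal
    rintro y ⟨α, rfl⟩
    simp only [SetLike.mem_coe, Subgroup.mem_comap, killT_of]
    split_ifs
    · exact (Rpair n J p).one_mem
    · exact Subgroup.subset_normalClosure ⟨α, rfl⟩
  exact hle hx

theorem Rpair_le_Pt {t : ℕ} {p : PairIdx (n + 1)} (h : t = p.1.1 ∨ t = p.1.2) :
    Rpair n J p ≤ Pt n J t := by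
  apply Subgroup.normalClosure_le_normal
  rintro y ⟨α, rfl⟩
  exact Subgroup.subset_normalClosure ⟨(p, α), h, rfl⟩

theorem Pt_eq_iSup (t : ℕ) :
    Pt n J t = ⨆ p : {p : PairIdx (n + 1) // t = p.1.1 ∨ t = p.1.2}, Rpair n J p.1 := by
  apply le_antisymm
  · haveI : (⨆ p : {p : PairIdx (n + 1) // t = p.1.1 ∨ t = p.1.2}, Rpair n J p.1).Normal :=
      mynormal_iSup _ fun p => inferInstance
    apply Subgroup.normalClosure_le_normal
    rintro y ⟨x, hx, rfl⟩
    exact Subgroup.mem_iSup_of_mem ⟨x.1, hx⟩ (Subgroup.subset_normalClosure ⟨x.2, rfl⟩)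
  · exact iSup_le fun p => Rpair_le_Pt n J p.2

end KillT

/-! ### `RT` basic lemmas -/

section RTlemmas
variable (n : ℕ) (J : Type)

theorem le_RT (T : Set ℕ) (L : List (PairIdx (n + 1))) (h1 : L ≠ [])
    (h2 : T ⊆ pairsUnion L) : iteratedCommutator (L.map (Rpair n J)) ≤ RT n J T :=
  le_iSup_of_le L (le_iSup_of_le h1 (le_iSup_of_le h2 le_rfl))

theorem RT_le {T : Set ℕ} {K : Subgroup (FreeGp n J)}
    (h : ∀ L, L ≠ [] → T ⊆ pairsUnion L → iteratedCommutator (L.map (Rpair n J)) ≤ K) :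
    RT n J T ≤ K :=
  iSup_le fun L => iSup_le fun h1 => iSup_le fun h2 => h L h1 h2

theorem RT_antitone {T T' : Set ℕ} (h : T ⊆ T') : RT n J T' ≤ RT n J T :=
  RT_le n J fun L h1 h2 => le_RT n J T L h1 (h.trans h2)

instance RT_normal (T : Set ℕ) : (RT n J T).Normal := by
  apply mynormal_iSup
  intro L
  apply mynormal_iSup
  intro h1
  apply mynormal_iSup
  intro h2
  apply ic_normal
  intro K hK
  rw [List.mem_map] at hK
  obtain ⟨p, -, rfl⟩ := hK
  infer_instance

theorem RT_empty : RT n J (∅ : Set ℕ) = ⊤ := by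
  rw [eq_top_iff]
  have key : ∀ w : FreeGp n J, w ∈ RT n J ∅ := by
    intro w
    induction w using FreeGroup.induction_on with
    | C1 => exact one_mem _
    | of x =>
      have h1 : FreeGroup.of x ∈ Rpair n J x.1 := Subgroup.subset_normalClosure ⟨x.2, rfl⟩
      have h2 : iteratedCommutator ([x.1].map (Rpair n J)) ≤ RT n J ∅ :=
        le_RT n J ∅ [x.1] (by simp) (Set.empty_subset _)
      exact h2 h1
    | inv_of x ih => exact inv_mem ih
    | mul x y ihx ihy => exact mul_mem ihx ihy
  exact fun w _ => key w

end RTlemmas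

/-! ### pairsUnion lemmas -/

section PU
variable {m : ℕ}

theorem pairsUnion_append (L L' : List (PairIdx m)) :
    pairsUnion (L ++ L') = pairsUnion L ∪ pairsUnion L' := by
  ext k
  constructor
  · rintro ⟨p, hp, h⟩
    rcases List.mem_append.mp hp with h' | h'
    · exact Or.inl ⟨p, h', h⟩
    · exact Or.inr ⟨p, h', h⟩
  · rintro (⟨p, hp, h⟩ | ⟨p, hp, h⟩)
    · exact ⟨p, List.mem_append_left _ hp, h⟩
    · exact ⟨p, List.mem_append_right _ hp, h⟩

theorem mem_pairsUnion_fst {p : PairIdx m} {L : List (PairIdx m)} (hp : p ∈ L) :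
    p.1.1 ∈ pairsUnion L := ⟨p, hp, Or.inl rfl⟩

theorem mem_pairsUnion_snd {p : PairIdx m} {L : List (PairIdx m)} (hp : p ∈ L) :
    p.1.2 ∈ pairsUnion L := ⟨p, hp, Or.inr rfl⟩

theorem mem_pairsUnion_of_colored {t : ℕ} {p : PairIdx m} {L : List (PairIdx m)}
    (hp : p ∈ L) (h : t = p.1.1 ∨ t = p.1.2) : t ∈ pairsUnion L := ⟨p, hp, h⟩

end PU

/-! ### Core lemmas -/

section Core
variable (n : ℕ) (J : Type)

theorem map_Rpair_ne_nil {L : List (PairIdx (n + 1))} (h : L ≠ []) :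
    L.map (Rpair n J) ≠ [] := by
  cases L with
  | nil => exact absurd rfl h
  | cons a L => simp

theorem ic_map_append1 (L : List (PairIdx (n + 1))) (p : PairIdx (n + 1)) (hne : L ≠ []) :
    iteratedCommutator ((L ++ [p]).map (Rpair n J)) =
      ⁅iteratedCommutator (L.map (Rpair n J)), Rpair n J p⁆ := by
  rw [List.map_append, List.map_singleton, ic_append _ _ (map_Rpair_ne_nil n J hne)]

theorem ic_pair (p q : PairIdx (n + 1)) :
    iteratedCommutator ([p, q].map (Rpair n J)) = ⁅Rpair n J p, Rpair n J q⁆ := rfl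

/-- the two-subgroup lemma: `R_p ∩ P_t = [R_p, P_t]` when `p` is not colored by `t` -/
theorem Rpair_inf_Pt_le (t : ℕ) (p : PairIdx (n + 1)) (hp : ¬(t = p.1.1 ∨ t = p.1.2)) :
    Rpair n J p ⊓ Pt n J t ≤ ⁅Rpair n J p, Pt n J t⁆ := by
  set N := ⁅Rpair n J p, Pt n J t⁆ with hN
  rintro x ⟨hxR, hxP⟩
  let q := QuotientGroup.mk' N
  have claim : ∀ y ∈ Rpair n J p, q (killT n J t y) = q y := by
    intro y hy
    change y ∈ Subgroup.closure
      (Group.conjugatesOfSet (Set.range fun α : J => FreeGroup.of (p, α))) at hy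
    induction hy using Subgroup.closure_induction with
    | mem y hy =>
      rw [Group.mem_conjugatesOfSet_iff] at hy
      obtain ⟨a, ⟨α, rfl⟩, hconj⟩ := hy
      obtain ⟨g, rfl⟩ := isConj_iff.mp hconj
      have hofp : killT n J t (FreeGroup.of (p, α)) = FreeGroup.of (p, α) := by
        rw [killT_of, if_neg hp]
      set r := killT n J t g * g⁻¹ with hr
      have hrPt : r ∈ Pt n J t := by
        rw [mem_Pt_iff]
        rw [hr, map_mul, map_inv, killT_killT]
        simp
      have hkill : killT n J t (g * FreeGroup.of (p, α) * g⁻¹)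
          = ⁅r, g * FreeGroup.of (p, α) * g⁻¹⁆ * (g * FreeGroup.of (p, α) * g⁻¹) := by
        rw [map_mul, map_mul, map_inv, hofp, hr]
        group
      have hyR : g * FreeGroup.of (p, α) * g⁻¹ ∈ Rpair n J p :=
        (Rpair_normal n J p).conj_mem _ (Subgroup.subset_normalClosure ⟨α, rfl⟩) g
      have hcm : ⁅r, g * FreeGroup.of (p, α) * g⁻¹⁆ ∈ N := by
        rw [hN, Subgroup.commutator_comm]
        exact Subgroup.commutator_mem_commutator hrPt hyR
      rw [hkill, map_mul]
      rw [show q ⁅r, g * FreeGroup.of (p, α) * g⁻¹⁆ = 1 from (QuotientGroup.eq_one_iff _).mpr hcm]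
      rw [one_mul]
    | one => simp
    | mul a b _ _ iha ihb => rw [map_mul, map_mul, iha, ihb, map_mul]
    | inv a _ iha => rw [map_inv, map_inv, iha, map_inv]
  have h1 : q x = 1 := by
    rw [← claim x hxR, (mem_Pt_iff n J t x).mp hxP, map_one]
  exact (QuotientGroup.eq_one_iff x).mp h1

end Core

section Bounds
variable (n : ℕ) (J : Type)

theorem comm_RT_Rpair_le (t : ℕ) (L₀ : List (PairIdx (n + 1))) (p : PairIdx (n + 1)) :
    ⁅RT n J (pairsUnion L₀ ∪ {t}), Rpair n J p⁆ ≤ RT n J (pairsUnion (L₀ ++ [p]) ∪ {t}) := by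
  rw [RT]
  apply mycommutator_iSup_le_left
  intro L'
  apply mycommutator_iSup_le_left
  intro h1
  apply mycommutator_iSup_le_left
  intro h2
  rw [← ic_map_append1 n J L' p h1]
  apply le_RT _ _ _ _ (by simp)
  intro k hk
  rw [pairsUnion_append] at hk ⊢
  simp only [Set.mem_union, Set.mem_singleton_iff] at hk ⊢
  rcases hk with (hk | hk) | rfl
  · exact Or.inl (h2 (Set.mem_union_left _ hk))
  · exact Or.inr hk
  · exact Or.inl (h2 (Set.mem_union_right _ rfl))

theorem comm_A_PtPart_le (t : ℕ) (L₀ : List (PairIdx (n + 1))) (p : PairIdx (n + 1))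
    (hne : L₀ ≠ []) :
    ⁅iteratedCommutator (L₀.map (Rpair n J)), Rpair n J p ⊓ Pt n J t⁆ ≤
      RT n J (pairsUnion (L₀ ++ [p]) ∪ {t}) := by
  by_cases hp : t = p.1.1 ∨ t = p.1.2
  · refine le_trans (Subgroup.commutator_mono le_rfl inf_le_left) ?_
    rw [← ic_map_append1 n J L₀ p hne]
    apply le_RT _ _ _ _ (by simp)
    intro k hk
    simp only [Set.mem_union, Set.mem_singleton_iff] at hk
    rcases hk with hk | rfl
    · exact hk
    · exact mem_pairsUnion_of_colored (List.mem_append_right _ (List.mem_singleton_self p)) hp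
  · refine le_trans (Subgroup.commutator_mono le_rfl (Rpair_inf_Pt_le n J t p hp)) ?_
    have hV : ⁅Rpair n J p, Pt n J t⁆ ≤
        ⨆ qq : {qq : PairIdx (n + 1) // t = qq.1.1 ∨ t = qq.1.2},
          ⁅Rpair n J p, Rpair n J qq.1⁆ := by
      conv_lhs => rw [Pt_eq_iSup]
      haveI : (⨆ qq : {qq : PairIdx (n + 1) // t = qq.1.1 ∨ t = qq.1.2},
          ⁅Rpair n J p, Rpair n J qq.1⁆).Normal := mynormal_iSup _ fun _ => inferInstance
      apply mycommutator_iSup_le_right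
      intro qq
      exact le_iSup (fun qq : {qq : PairIdx (n + 1) // t = qq.1.1 ∨ t = qq.1.2} =>
        ⁅Rpair n J p, Rpair n J qq.1⁆) qq
    refine le_trans (Subgroup.commutator_mono le_rfl hV) ?_
    apply mycommutator_iSup_le_right
    intro qq
    rw [Subgroup.commutator_comm]
    apply mythree_subgroups
    · -- ⁅⁅R_qq, A⁆, R_p⁆ ≤ M
      rw [Subgroup.commutator_comm (Rpair n J qq.1), ← ic_map_append1 n J L₀ qq.1 hne,
        ← ic_map_append1 n J (L₀ ++ [qq.1]) p (by simp)]
      apply le_RT _ _ _ _ (by simp)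
      intro k hk
      rw [pairsUnion_append] at hk
      rw [pairsUnion_append, pairsUnion_append]
      simp only [Set.mem_union, Set.mem_singleton_iff] at hk ⊢
      rcases hk with (hk | hk) | rfl
      · exact Or.inl (Or.inl hk)
      · exact Or.inr hk
      · exact Or.inl (Or.inr ⟨qq.1, List.mem_singleton_self _, qq.2⟩)
    · -- ⁅⁅A, R_p⁆, R_qq⁆ ≤ M
      rw [← ic_map_append1 n J L₀ p hne, ← ic_map_append1 n J (L₀ ++ [p]) qq.1 (by simp)]
      apply le_RT _ _ _ _ (by simp)
      intro k hk
      rw [pairsUnion_append] at hk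
      rw [pairsUnion_append, pairsUnion_append]
      simp only [Set.mem_union, Set.mem_singleton_iff] at hk ⊢
      rcases hk with (hk | hk) | rfl
      · exact Or.inl (Or.inl hk)
      · exact Or.inl (Or.inr hk)
      · exact Or.inr ⟨qq.1, List.mem_singleton_self _, qq.2⟩

end Bounds

section ClaimB
variable (n : ℕ) (J : Type)

theorem pairsUnion_mono {m : ℕ} {L L' : List (PairIdx m)} (h : ∀ x ∈ L, x ∈ L') :
    pairsUnion L ⊆ pairsUnion L' := fun k ⟨p, hp, hc⟩ => ⟨p, h p hp, hc⟩

theorem inf_le_RT_single (t : ℕ) (p : PairIdx (n + 1)) :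
    Rpair n J p ⊓ Pt n J t ≤ RT n J (pairsUnion [p] ∪ {t}) := by
  by_cases hp : t = p.1.1 ∨ t = p.1.2
  · refine le_trans inf_le_left ?_
    have h0 : Rpair n J p = iteratedCommutator ([p].map (Rpair n J)) := rfl
    rw [h0]
    apply le_RT _ _ _ _ (by simp)
    intro k hk
    simp only [Set.mem_union, Set.mem_singleton_iff] at hk
    rcases hk with hk | rfl
    · exact hk
    · exact mem_pairsUnion_of_colored (List.mem_singleton_self p) hp
  · refine le_trans (Rpair_inf_Pt_le n J t p hp) ?_
    rw [Pt_eq_iSup]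
    apply mycommutator_iSup_le_right
    intro qq
    rw [← ic_pair n J p qq.1]
    apply le_RT _ _ _ _ (by simp)
    intro k hk
    simp only [Set.mem_union, Set.mem_singleton_iff] at hk
    rcases hk with hk | rfl
    · exact pairsUnion_mono (by intro x hx; rcases List.mem_singleton.mp hx with rfl; simp) hk
    · exact mem_pairsUnion_of_colored (by simp) qq.2

theorem claimB (t : ℕ) : ∀ (L : List (PairIdx (n + 1))), L ≠ [] →
    ∀ x ∈ iteratedCommutator (L.map (Rpair n J)),
      x * (killT n J t x)⁻¹ ∈ RT n J (pairsUnion L ∪ {t}) := by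
  intro L
  induction L using List.reverseRecOn with
  | nil => intro h; exact absurd rfl h
  | append_singleton L₀ p ih =>
    intro _
    by_cases hL₀ : L₀ = []
    · subst hL₀
      intro x hx
      have hxR : x ∈ Rpair n J p := hx
      have hmem : x * (killT n J t x)⁻¹ ∈ Rpair n J p ⊓ Pt n J t := by
        rw [Subgroup.mem_inf]
        constructor
        · exact mul_mem hxR (inv_mem (killT_mem_Rpair n J t p hxR))
        · rw [mem_Pt_iff, map_mul, map_inv, killT_killT]; simp
      exact inf_le_RT_single n J t p hmem
    · intro x hx
      rw [ic_map_append1 n J L₀ p hL₀] at hx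
      set M := RT n J (pairsUnion (L₀ ++ [p]) ∪ {t}) with hM
      let q := QuotientGroup.mk' M
      suffices hsuff : q (killT n J t x) = q x by
        have h1 : q (x * (killT n J t x)⁻¹) = 1 := by rw [map_mul, map_inv, hsuff]; simp
        exact (QuotientGroup.eq_one_iff _).mp h1
      have hle : ⁅iteratedCommutator (L₀.map (Rpair n J)), Rpair n J p⁆ ≤
          MonoidHom.eqLocus (q.comp (killT n J t)) q := by
        rw [Subgroup.commutator_def, Subgroup.closure_le]
        rintro w ⟨a, ha, r, hr, rfl⟩
        show (q.comp (killT n J t)) ⁅a, r⁆ = q ⁅a, r⁆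
        rw [MonoidHom.comp_apply]
        obtain ⟨m, hm⟩ : ∃ m, m = a * (killT n J t a)⁻¹ := ⟨_, rfl⟩
        obtain ⟨d, hd⟩ : ∃ d, d = r⁻¹ * killT n J t r := ⟨_, rfl⟩
        have hm₀ : m ∈ RT n J (pairsUnion L₀ ∪ {t}) := hm ▸ ih hL₀ a ha
        have hδ : d ∈ Rpair n J p ⊓ Pt n J t := by
          rw [Subgroup.mem_inf]
          constructor
          · exact hd ▸ mul_mem (inv_mem hr) (killT_mem_Rpair n J t p hr)
          · rw [mem_Pt_iff, hd, map_mul, map_inv, killT_killT]; simp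
        have hδR : d ∈ Rpair n J p := (Subgroup.mem_inf.mp hδ).1
        have hcomm : ∀ u v : FreeGp n J, ⁅u, v⁆ ∈ M → Commute (q u) (q v) := by
          intro u v h
          have h1 : q ⁅u, v⁆ = 1 := (QuotientGroup.eq_one_iff _).mpr h
          rw [map_commutatorElement] at h1
          exact commutatorElement_eq_one_iff_commute.mp h1
        have hMR : ⁅RT n J (pairsUnion L₀ ∪ {t}), Rpair n J p⁆ ≤ M := comm_RT_Rpair_le n J t L₀ p
        have hAD : ⁅iteratedCommutator (L₀.map (Rpair n J)), Rpair n J p ⊓ Pt n J t⁆ ≤ M :=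
          comm_A_PtPart_le n J t L₀ p hL₀
        have hICR : ⁅iteratedCommutator (L₀.map (Rpair n J)), Rpair n J p⁆ ≤ Rpair n J p :=
          Subgroup.commutator_le_right _ _
        have h1 : Commute (q m) (q r) :=
          hcomm _ _ (hMR (Subgroup.commutator_mem_commutator hm₀ hr))
        have h2 : Commute (q m) (q d) :=
          hcomm _ _ (hMR (Subgroup.commutator_mem_commutator hm₀ hδR))
        have h3 : Commute (q a) (q d) :=
          hcomm _ _ (hAD (Subgroup.commutator_mem_commutator ha hδ))
        have h4 : Commute (q m) ⁅q a, q r⁆ := by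
          rw [← map_commutatorElement]
          exact hcomm _ _ (hMR (Subgroup.commutator_mem_commutator hm₀
            (hICR (Subgroup.commutator_mem_commutator ha hr))))
        have hka : killT n J t a = m⁻¹ * a := by rw [hm]; group
        have hkr : killT n J t r = r * d := by rw [hd]; group
        calc q (killT n J t ⁅a, r⁆)
            = ⁅q (killT n J t a), q (killT n J t r)⁆ := by
              rw [map_commutatorElement, map_commutatorElement]
          _ = ⁅(q m)⁻¹ * q a, q r * q d⁆ := by rw [hka, hkr, map_mul, map_inv, map_mul]
          _ = ⁅q a, q r⁆ := comm_conj_calc _ _ _ _ h1 h2 h3 h4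
          _ = q ⁅a, r⁆ := (map_commutatorElement _ _ _).symm
      exact hle hx

end ClaimB

section KeyStep
variable (n : ℕ) (J : Type)

theorem keyStep (t : ℕ) (S : Set ℕ) {x : FreeGp n J} (hx : x ∈ RT n J S)
    (hxP : x ∈ Pt n J t) : x ∈ RT n J (S ∪ {t}) := by
  let q := QuotientGroup.mk' (RT n J (S ∪ {t}))
  have hle : RT n J S ≤ MonoidHom.eqLocus (q.comp (killT n J t)) q := by
    apply RT_le
    intro L h1 h2 y hy
    show (q.comp (killT n J t)) y = q y
    rw [MonoidHom.comp_apply]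
    have hmem : y * (killT n J t y)⁻¹ ∈ RT n J (S ∪ {t}) :=
      RT_antitone n J (Set.union_subset_union_left {t} h2) (claimB n J t L h1 y hy)
    have h1' : q (y * (killT n J t y)⁻¹) = 1 := (QuotientGroup.eq_one_iff _).mpr hmem
    rw [map_mul, map_inv] at h1'
    exact (mul_inv_eq_one.mp h1').symm
  have hx' : q (killT n J t x) = q x := hle hx
  rw [(mem_Pt_iff n J t x).mp hxP, map_one] at hx'
  exact (QuotientGroup.eq_one_iff x).mp hx'.symm

/-- The "inverse" of the face map on surviving generators. -/
def backMap (k : Fin (n + 1)) : FreeGroup (PairIdx n × J) →* FreeGp n J :=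
  FreeGroup.lift fun q =>
    FreeGroup.of (⟨(if (k : ℕ) + 1 ≤ q.1.1.1 then q.1.1.1 + 1 else q.1.1.1,
      if (k : ℕ) + 1 ≤ q.1.1.2 then q.1.1.2 + 1 else q.1.1.2), by
        have hq := q.1.2
        refine ⟨?_, ?_, ?_⟩ <;> split_ifs <;> omega⟩, q.2)

theorem of_mk_eq {a b i j : ℕ} (h : 1 ≤ a ∧ a < b ∧ b ≤ n + 1)
    (h' : 1 ≤ i ∧ i < j ∧ j ≤ n + 1) (α : J) (hai : a = i) (hbj : b = j) :
    (FreeGroup.of ((⟨(a, b), h⟩ : PairIdx (n + 1)), α) : FreeGp n J)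
      = FreeGroup.of (⟨(i, j), h'⟩, α) := by
  subst hai; subst hbj; rfl

theorem back_comp_face (k : Fin (n + 1)) :
    (backMap n J k).comp (faceMap n J k) = killT n J ((k : ℕ) + 1) := by
  apply FreeGroup.ext_hom
  intro x
  obtain ⟨⟨⟨i, j⟩, hij⟩, β⟩ := x
  rw [MonoidHom.comp_apply, killT_of]
  show backMap n J k (faceMap n J k (FreeGroup.of (⟨(i, j), hij⟩, β))) = _
  rw [faceMap, FreeGroup.lift_apply_of]
  dsimp only
  split_ifs with hf1 hf2 hf3 hf4 <;>
    first
      | rfl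
      | (exfalso; omega)
      | (rw [backMap, FreeGroup.lift_apply_of]
         dsimp only
         refine of_mk_eq n J _ _ _ ?_ ?_ <;> split_ifs <;> omega)

theorem ker_face_le_Pt (k : Fin (n + 1)) :
    (faceMap n J k).ker ≤ Pt n J ((k : ℕ) + 1) := by
  intro w hw
  rw [mem_Pt_iff]
  have h1 := DFunLike.congr_fun (back_comp_face n J k) w
  rw [MonoidHom.mem_ker] at hw
  rw [MonoidHom.comp_apply, hw, map_one] at h1
  exact h1.symm

theorem face_of_colored (k : Fin (n + 1)) (p : PairIdx (n + 1)) (α : J)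
    (h : (k : ℕ) + 1 = p.1.1 ∨ (k : ℕ) + 1 = p.1.2) :
    faceMap n J k (FreeGroup.of (p, α)) = 1 := by
  have hp := p.2
  rw [faceMap, FreeGroup.lift_apply_of]
  dsimp only
  rcases h with h | h
  · rw [dif_neg (by omega), dif_pos h]
  · rw [dif_neg (by omega), dif_neg (by omega), dif_neg (by omega), dif_pos h]

end KeyStep

/-- The Moore cycle subgroup `⋂_{k=0}^{n} ker(d_k : G_n^{*J} → G_{n-1}^{*J})` equals
`R[{1, 2, …, n+1}]`, i.e. the symmetric commutator subgroup `[R_{i,j} | 1 ≤ i < j ≤ n+1]_S`. -/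
theorem mooreCycles_eq_RT (n : ℕ) (hn : 1 ≤ n) (J : Type) :
    (⨅ k : Fin (n + 1), MonoidHom.ker (faceMap n J k)) = RT n J (Set.Icc 1 (n + 1)) := by
  apply le_antisymm
  · intro w hw
    have hPt : ∀ t : ℕ, 1 ≤ t → t ≤ n + 1 → w ∈ Pt n J t := by
      intro t h1 h2
      have hk : w ∈ (faceMap n J ⟨t - 1, by omega⟩).ker := Subgroup.mem_iInf.mp hw _
      have h3 := ker_face_le_Pt n J ⟨t - 1, by omega⟩ hk
      have ht : ((⟨t - 1, by omega⟩ : Fin (n + 1)) : ℕ) + 1 = t := by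
        simp only [Fin.val_mk]; omega
      rwa [ht] at h3
    have key : ∀ S : Finset ℕ, ↑S ⊆ Set.Icc 1 (n + 1) → w ∈ RT n J ↑S := by
      intro S
      induction S using Finset.induction_on with
      | empty => intro _; rw [Finset.coe_empty, RT_empty]; exact Subgroup.mem_top w
      | @insert a S haS ih =>
        intro hsub
        have h1 : (↑S : Set ℕ) ⊆ Set.Icc 1 (n + 1) :=
          fun z hz => hsub (by rw [Finset.coe_insert]; exact Set.mem_insert_of_mem _ hz)
        have h2 : a ∈ Set.Icc 1 (n + 1) := hsub (by rw [Finset.coe_insert]; exact Set.mem_insert _ _)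
        rw [Set.mem_Icc] at h2
        have h3 := keyStep n J a ↑S (ih h1) (hPt a h2.1 h2.2)
        rwa [Finset.coe_insert, ← Set.union_singleton]
    have hfin := key (Finset.Icc 1 (n + 1)) (by rw [Finset.coe_Icc])
    rwa [Finset.coe_Icc] at hfin
  · apply le_iInf
    intro k
    apply RT_le
    intro L h1 h2
    have hk1 : ((k : ℕ) + 1) ∈ pairsUnion L := by
      apply h2
      rw [Set.mem_Icc]
      exact ⟨by omega, by have := k.isLt; omega⟩
    obtain ⟨p, hpL, hcol⟩ := hk1
    haveI : (faceMap n J k).ker.Normal := MonoidHom.normal_ker _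
    apply ic_le _ _ ?_ (map_Rpair_ne_nil n J h1)
    refine ⟨Rpair n J p, List.mem_map_of_mem hpL, ?_⟩
    apply Subgroup.normalClosure_le_normal
    rintro y ⟨α, rfl⟩
    simp only [SetLike.mem_coe, MonoidHom.mem_ker]
    exact face_of_colored n J k p α hcol
end

section
/- Let n ≥ 1 and let J be an index set. In the free group G_n^{*J}, the subgroup R[{1, 2, …, n+1}] equals the product (join) of the finitely many left-normed iterated commutator subgroups [[…[[R_{i_1,j_1}, R_{i_2,j_2}], …], R_{i_t,j_t}] taken over sequences of pairs (i_1,j_1), …, (i_t,j_t) such that (1) {i_1, j_1, i_2, j_2, …, i_t, j_t} = {1, 2, …, n+1}, and (2) for every 1 ≤ p ≤ t, the union of the pairs with the p-th pair deleted, {i_1, j_1, …, i_t, j_t} ∖ {i_p, j_p} computed by omitting the entries i_p, j_p from the sequence, is not equal to {1, 2, …, n+1}. -/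
section Aux

variable {G : Type*} [Group G]

private lemma foldl_comm_mono (L : List (Subgroup G)) {A B : Subgroup G} (h : A ≤ B) :
    L.foldl (fun A B => ⁅A, B⁆) A ≤ L.foldl (fun A B => ⁅A, B⁆) B := by
  induction L generalizing A B with
  | nil => exact h
  | cons K L ih => exact ih (Subgroup.commutator_mono h le_rfl)

private lemma foldl_comm_normal (L : List (Subgroup G)) (A : Subgroup G) (hA : A.Normal)
    (hL : ∀ H ∈ L, H.Normal) : (L.foldl (fun A B => ⁅A, B⁆) A).Normal := by
  induction L generalizing A with
  | nil => exact hA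
  | cons K L ih =>
    haveI := hA
    haveI := hL K List.mem_cons_self
    exact ih ⁅A, K⁆ inferInstance (fun H hH => hL H (List.mem_cons_of_mem _ hH))

private lemma foldl_comm_eraseIdx (L : List (Subgroup G)) (A : Subgroup G) (hA : A.Normal)
    (hL : ∀ H ∈ L, H.Normal) (q : ℕ) :
    L.foldl (fun A B => ⁅A, B⁆) A ≤ (L.eraseIdx q).foldl (fun A B => ⁅A, B⁆) A := by
  induction L generalizing A q with
  | nil => simp [List.eraseIdx]
  | cons K L ih =>
    haveI := hA
    haveI := hL K List.mem_cons_self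
    cases q with
    | zero =>
      simpa [List.eraseIdx] using
        (foldl_comm_mono L (Subgroup.commutator_le_left A K)).trans le_rfl
    | succ r =>
      simpa [List.eraseIdx] using
        ih ⁅A, K⁆ inferInstance (fun H hH => hL H (List.mem_cons_of_mem _ hH)) r

private lemma iteratedCommutator_eraseIdx_le (L : List (Subgroup G))
    (hL : ∀ H ∈ L, H.Normal) (q : ℕ) (hne : L.eraseIdx q ≠ []) :
    iteratedCommutator L ≤ iteratedCommutator (L.eraseIdx q) := by
  cases L with
  | nil => simp [iteratedCommutator]
  | cons H L =>
    haveI := hL H List.mem_cons_self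
    have hL' : ∀ K ∈ L, K.Normal := fun K hK => hL K (List.mem_cons_of_mem _ hK)
    cases q with
    | zero =>
      -- erase head
      simp only [List.eraseIdx] at hne ⊢
      cases L with
      | nil => exact absurd rfl hne
      | cons K L' =>
        haveI := hL' K List.mem_cons_self
        show (K :: L').foldl (fun A B => ⁅A, B⁆) H ≤ iteratedCommutator (K :: L')
        show ((K :: L').foldl (fun A B => ⁅A, B⁆) H) ≤ L'.foldl (fun A B => ⁅A, B⁆) K
        have : (K :: L').foldl (fun A B => ⁅A, B⁆) H = L'.foldl (fun A B => ⁅A, B⁆) ⁅H, K⁆ := rfl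
        rw [this]
        exact foldl_comm_mono L' (Subgroup.commutator_le_right H K)
    | succ r =>
      show L.foldl (fun A B => ⁅A, B⁆) H ≤ (L.eraseIdx r).foldl (fun A B => ⁅A, B⁆) H
      exact foldl_comm_eraseIdx L H inferInstance hL' r

end Aux

private lemma map_eraseIdx' {α β : Type*} (f : α → β) (L : List α) (q : ℕ) :
    (L.eraseIdx q).map f = (L.map f).eraseIdx q := by
  induction L generalizing q with
  | nil => simp [List.eraseIdx]
  | cons a L ih =>
    cases q with
    | zero => simp [List.eraseIdx]
    | succ r => simp [List.eraseIdx, ih]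

private lemma pairsUnion_subset_Icc {m : ℕ} (L : List (PairIdx m)) :
    pairsUnion L ⊆ Set.Icc 1 m := by
  rintro k ⟨p, _, hk⟩
  have := p.2
  rcases hk with rfl | rfl <;> constructor <;> omega

private lemma pairsUnion_nonempty_ne_nil {m : ℕ} {L : List (PairIdx m)}
    (h : (1 : ℕ) ∈ pairsUnion L) : L ≠ [] := by
  rintro rfl
  obtain ⟨p, hp, -⟩ := h
  exact absurd hp List.not_mem_nil

/-- `R[{1, 2, …, n+1}]` equals the join of the left-normed iterated commutator subgroups
`[[…[[R_{i₁,j₁}, R_{i₂,j₂}], …], R_{i_t,j_t}]` over the (finitely many) sequences of pairs whose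
indices fill out exactly `{1, …, n+1}` and such that omitting any one pair of the sequence no
longer fills out `{1, …, n+1}`. -/
theorem RT_eq_reduced_join (n : ℕ) (hn : 1 ≤ n) (J : Type) :
    RT n J (Set.Icc 1 (n + 1)) =
      ⨆ (L : List (PairIdx (n + 1))) (_ : pairsUnion L = Set.Icc 1 (n + 1))
        (_ : ∀ p < L.length, pairsUnion (L.eraseIdx p) ≠ Set.Icc 1 (n + 1)),
        iteratedCommutator (L.map (Rpair n J)) := by
  have h1 : (1 : ℕ) ∈ Set.Icc 1 (n + 1) := ⟨le_refl 1, by omega⟩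
  have hnorm : ∀ (L : List (PairIdx (n + 1))), ∀ H ∈ L.map (Rpair n J), H.Normal := by
    intro L H hH
    obtain ⟨p, -, rfl⟩ := List.mem_map.mp hH
    exact Subgroup.normalClosure_normal
  -- key: any covering list's commutator is below the reduced join
  have key : ∀ N (L : List (PairIdx (n + 1))), L.length ≤ N → L ≠ [] →
      Set.Icc 1 (n + 1) ⊆ pairsUnion L →
      iteratedCommutator (L.map (Rpair n J)) ≤
        ⨆ (L : List (PairIdx (n + 1))) (_ : pairsUnion L = Set.Icc 1 (n + 1))
          (_ : ∀ p < L.length, pairsUnion (L.eraseIdx p) ≠ Set.Icc 1 (n + 1)),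
          iteratedCommutator (L.map (Rpair n J)) := by
    intro N
    induction N with
    | zero =>
      intro L hlen hne _
      exact absurd (List.length_eq_zero_iff.mp (Nat.le_zero.mp hlen)) hne
    | succ N ih =>
      intro L hlen hne hcov
      have heq : pairsUnion L = Set.Icc 1 (n + 1) :=
        le_antisymm (pairsUnion_subset_Icc L) hcov
      by_cases hmin : ∀ p < L.length, pairsUnion (L.eraseIdx p) ≠ Set.Icc 1 (n + 1)
      · exact le_iSup_of_le L (le_iSup_of_le heq (le_iSup_of_le hmin le_rfl))
      · push_neg at hmin
        obtain ⟨q, hq, hq2⟩ := hmin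
        have hne' : L.eraseIdx q ≠ [] :=
          pairsUnion_nonempty_ne_nil (hq2 ▸ h1)
        have hstep : iteratedCommutator (L.map (Rpair n J)) ≤
            iteratedCommutator ((L.eraseIdx q).map (Rpair n J)) := by
          rw [map_eraseIdx']
          apply iteratedCommutator_eraseIdx_le _ (hnorm L) q
          intro h
          rw [← map_eraseIdx'] at h
          exact hne' (List.map_eq_nil_iff.mp h)
        refine hstep.trans (ih (L.eraseIdx q) ?_ hne' ?_)
        · have := List.length_eraseIdx_of_lt hq
          omega
        · rw [hq2]
  apply le_antisymm
  · rw [RT]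
    apply iSup_le; intro L
    apply iSup_le; intro hne
    apply iSup_le; intro hcov
    exact key L.length L le_rfl hne hcov
  · apply iSup_le; intro L
    apply iSup_le; intro heq
    apply iSup_le; intro _
    have hne : L ≠ [] := pairsUnion_nonempty_ne_nil (heq ▸ h1)
    exact le_iSup_of_le L (le_iSup_of_le hne (le_iSup_of_le (heq ▸ subset_rfl) le_rfl))
end

section
/- Let A, G_1, G_2 be groups and let φ_1 : A → G_1 and φ_2 : A → G_2 be injective group homomorphisms that are not surjective (φ_1(A) ≠ G_1 and φ_2(A) ≠ G_2). Let G = G_1 *_A G_2 be the free product with amalgamation (the pushout of φ_1 and φ_2 in the category of groups) and let ι : A → G be the canonical homomorphism. Then the center of G is contained in ι(Z(A)); that is, every central element g of G satisfies g = ι(a) for some element a in the center of A. -/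
universe u

/-- The two-element family of groups `{G₁, G₂}` indexed by `Bool`. -/
def amalgFam (G₁ G₂ : Type u) : Bool → Type u := fun b => match b with
  | true => G₁
  | false => G₂

instance amalgFamGroup (G₁ G₂ : Type u) [Group G₁] [Group G₂] :
    (b : Bool) → Group (amalgFam G₁ G₂ b) := fun b => match b with
  | true => ‹Group G₁›
  | false => ‹Group G₂›

/-- The family of homomorphisms `{φ₁ : A →* G₁, φ₂ : A →* G₂}` indexed by `Bool`. -/
def amalgHom {A G₁ G₂ : Type u} [Group A] [Group G₁] [Group G₂]
    (φ₁ : A →* G₁) (φ₂ : A →* G₂) : (b : Bool) → A →* amalgFam G₁ G₂ b := fun b => match b with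
  | true => φ₁
  | false => φ₂

namespace AmalgAux

open Monoid Monoid.PushoutI Monoid.PushoutI.NormalWord Function

variable {ι : Type*} {H : Type*} {G : ι → Type*} [Group H] [(i : ι) → Group (G i)]
  {φ : (i : ι) → H →* G i}

theorem reduced_toWord {d : Transversal φ} (w : NormalWord d) :
    Reduced φ w.toWord := by
  intro g hg hgr
  refine w.ne_one g hg ?_
  have hset : g.2 ∈ d.set g.1 := w.normalized g.1 g.2 hg
  have h1 : (((d.compl g.1).equiv g.2).2 : G g.1) = g.2 :=
    (Subgroup.IsComplement.equiv_snd_eq_self_iff_mem (d.compl g.1) (one_mem _)).2 hset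
  have h2 : (((d.compl g.1).equiv g.2).2 : G g.1) = 1 :=
    (Subgroup.IsComplement.coe_equiv_snd_eq_one_iff_mem (d.compl g.1) (d.one_mem _)).2 hgr
  exact h1.symm.trans h2

theorem exists_rep (hφ : ∀ i, Injective (φ i)) (g : PushoutI φ) :
    ∃ (h : H) (v : CoprodI.Word G), Reduced φ v ∧ g = base φ h * ofCoprodI v.prod := by
  classical
  rcases transversal_nonempty φ hφ with ⟨d⟩
  let w : NormalWord d := g • NormalWord.empty
  have hprod : w.prod = g := by
    simp [w, prod_smul]
  exact ⟨w.head, w.toWord, reduced_toWord w, by rw [← hprod]; rfl⟩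

theorem map_fst_eq_of_rep_eq (hφ : ∀ i, Injective (φ i)) {h₁ h₂ : H} {v₁ v₂ : CoprodI.Word G}
    (hv₁ : Reduced φ v₁) (hv₂ : Reduced φ v₂)
    (heq : base φ h₁ * ofCoprodI v₁.prod = base φ h₂ * ofCoprodI v₂.prod) :
    v₁.toList.map Sigma.fst = v₂.toList.map Sigma.fst := by
  classical
  rcases transversal_nonempty φ hφ with ⟨d⟩
  rcases hv₁.exists_normalWord_prod_eq d with ⟨w₁, hw₁, hm₁⟩
  rcases hv₂.exists_normalWord_prod_eq d with ⟨w₂, hw₂, hm₂⟩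
  have hsm : (base φ h₁ • w₁) = (base φ h₂ • w₂) :=
    prod_injective (by rw [prod_smul, prod_smul, hw₁, hw₂, heq])
  have hlist : w₁.toList = w₂.toList := by
    have := congrArg (fun w : NormalWord d => w.toList) hsm
    simpa [base_smul_def] using this
  rw [← hm₁, ← hm₂, hlist]

theorem reduced_cons {i : ι} {m : G i} {w : CoprodI.Word G} {h1 h2}
    (hm : m ∉ (φ i).range) (hw : Reduced φ w) :
    Reduced φ (CoprodI.Word.cons m w h1 h2) := by
  intro g hg
  rw [CoprodI.Word.cons_toList, List.mem_cons] at hg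
  rcases hg with rfl | hg
  · exact hm
  · exact hw g hg

theorem reduced_of_reduced_cons {i : ι} {m : G i} {w : CoprodI.Word G} {h1 h2}
    (hw : Reduced φ (CoprodI.Word.cons m w h1 h2)) : Reduced φ w := by
  intro g hg
  exact hw g (by rw [CoprodI.Word.cons_toList]; exact List.mem_cons_of_mem _ hg)

theorem mem_range_of_reduced_cons {i : ι} {m : G i} {w : CoprodI.Word G} {h1 h2}
    (hw : Reduced φ (CoprodI.Word.cons m w h1 h2)) : m ∉ (φ i).range :=
  hw ⟨i, m⟩ (by rw [CoprodI.Word.cons_toList]; exact List.mem_cons_self)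

theorem fstIdx_eq_head? (w : CoprodI.Word G) :
    w.fstIdx = (w.toList.map Sigma.fst).head? := by
  rw [CoprodI.Word.fstIdx, List.head?_map]

/-- Multiplying a reduced word on the right by `of k x`, where the last index
of the word is not `k`, gives a reduced word with one more letter. -/
theorem exists_word_mul_of {k : ι} {x : G k} (hx : x ∉ (φ k).range) (v : CoprodI.Word G)
    (hv : Reduced φ v) (hlast : (v.toList.map Sigma.fst).getLast? ≠ some k) :
    ∃ v' : CoprodI.Word G, Reduced φ v' ∧
      v'.toList.map Sigma.fst = v.toList.map Sigma.fst ++ [k] ∧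
      ofCoprodI (φ := φ) v'.prod = ofCoprodI v.prod * of k x := by
  have hx1 : x ≠ 1 := fun h => hx (h ▸ one_mem _)
  induction v using CoprodI.Word.consRecOn with
  | empty =>
    refine ⟨CoprodI.Word.cons x CoprodI.Word.empty (by simp [CoprodI.Word.fstIdx]) hx1,
      ?_, by simp, ?_⟩
    · intro g hg
      rw [CoprodI.Word.cons_toList] at hg
      simp only [CoprodI.Word.empty, List.mem_singleton] at hg
      subst hg; exact hx
    · rw [CoprodI.Word.prod_cons]; simp
  | cons i m w h1 h2 ih =>
    have hred_w : Reduced φ w := reduced_of_reduced_cons hv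
    have hm : m ∉ (φ i).range := mem_range_of_reduced_cons hv
    rw [CoprodI.Word.cons_toList, List.map_cons] at hlast
    have hki : (w.toList.map Sigma.fst) = [] → k ≠ i := by
      intro hnil hki
      subst hki
      rw [hnil] at hlast
      exact hlast rfl
    have hlast' : (w.toList.map Sigma.fst).getLast? ≠ some k := by
      rcases hnil : w.toList.map Sigma.fst with _ | ⟨a, l⟩
      · simp
      · rw [hnil] at hlast
        rwa [List.getLast?_cons_cons] at hlast
    obtain ⟨v'', hv'', hm'', hp''⟩ := ih hred_w hlast'
    have hfst'' : v''.fstIdx ≠ some i := by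
      rw [fstIdx_eq_head?, hm'']
      rcases hnil : w.toList.map Sigma.fst with _ | ⟨a, l⟩
      · have := hki hnil
        simp [this]
      · rw [fstIdx_eq_head?, hnil] at h1
        simpa using h1
    refine ⟨CoprodI.Word.cons m v'' hfst'' h2, reduced_cons hm hv'', ?_, ?_⟩
    · rw [CoprodI.Word.cons_toList, CoprodI.Word.cons_toList]
      simp [hm'']
    · rw [CoprodI.Word.prod_cons, CoprodI.Word.prod_cons, map_mul, map_mul, hp'',
        mul_assoc]

/-- Multiplying a reduced word on the left by `of k x`, where the first index of the
word is `k`: the result is `base h' * v'` where `v'` has the same index list, or that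
list with the head removed. -/
theorem exists_of_mul_word {k : ι} (x : G k) (v : CoprodI.Word G) (hv : Reduced φ v)
    (hfst : v.fstIdx = some k) :
    ∃ (h' : H) (v' : CoprodI.Word G), Reduced φ v' ∧
      (v'.toList.map Sigma.fst = v.toList.map Sigma.fst ∨
        v'.toList.map Sigma.fst = (v.toList.map Sigma.fst).tail) ∧
      base φ h' * ofCoprodI v'.prod = of k x * ofCoprodI v.prod := by
  induction v using CoprodI.Word.consRecOn with
  | empty => simp [CoprodI.Word.fstIdx] at hfst
  | cons i m w h1 h2 _ =>
    have hik : i = k := by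
      rw [CoprodI.Word.fstIdx_cons] at hfst
      exact Option.some_injective _ hfst
    subst hik
    have hred_w : Reduced φ w := reduced_of_reduced_cons hv
    have hm : m ∉ (φ i).range := mem_range_of_reduced_cons hv
    have hprod : of (φ := φ) i x * ofCoprodI (CoprodI.Word.cons m w h1 h2).prod
        = of i (x * m) * ofCoprodI w.prod := by
      rw [CoprodI.Word.prod_cons, map_mul, ofCoprodI_of, ← mul_assoc, ← map_mul]
    by_cases hmem : x * m ∈ (φ i).range
    · obtain ⟨a, ha⟩ := hmem
      refine ⟨a, w, hred_w, Or.inr ?_, ?_⟩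
      · rw [CoprodI.Word.cons_toList]; simp
      · rw [hprod, ← ha, of_apply_eq_base]
    · have hne1 : x * m ≠ 1 := fun h => hmem (h ▸ one_mem _)
      refine ⟨1, CoprodI.Word.cons (x * m) w h1 hne1, reduced_cons hmem hred_w,
        Or.inl ?_, ?_⟩
      · rw [CoprodI.Word.cons_toList, CoprodI.Word.cons_toList]; simp
      · rw [map_one, one_mul, CoprodI.Word.prod_cons, map_mul, ofCoprodI_of, hprod]

theorem center_le_base_range (hφ : ∀ i, Injective (φ i))
    (hne : ∀ i, (φ i).range ≠ ⊤) (hι : ∀ i : ι, ∃ j, j ≠ i)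
    {g : PushoutI φ} (hg : g ∈ Subgroup.center (PushoutI φ)) :
    g ∈ (base φ).range := by
  by_contra hr
  have hex : ∀ i : ι, ∃ x : G i, x ∉ (φ i).range := by
    intro i
    by_contra hc
    push_neg at hc
    exact hne i ((Subgroup.eq_top_iff' _).2 hc)
  have hcomm : ∀ u : PushoutI φ, u * g = g * u := fun u => Subgroup.mem_center_iff.1 hg u
  obtain ⟨h, v, hv, hrep⟩ := exists_rep hφ g
  have hvne : v.toList ≠ [] := by
    intro hnil
    refine hr ⟨h, ?_⟩
    have hp1 : v.prod = 1 := by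
      rw [CoprodI.Word.prod, hnil]; simp
    rw [hrep, hp1, map_one, mul_one]
  obtain ⟨⟨i, g₁⟩, t, hvl⟩ := List.exists_cons_of_ne_nil hvne
  have hLcons : v.toList.map Sigma.fst = i :: t.map Sigma.fst := by rw [hvl]; rfl
  have hLne : v.toList.map Sigma.fst ≠ [] := by rw [hLcons]; simp
  obtain ⟨j, hj⟩ : ∃ j, (v.toList.map Sigma.fst).getLast? = some j :=
    ⟨_, List.getLast?_eq_getLast hLne⟩
  have hfstv : v.fstIdx = some i := by rw [fstIdx_eq_head?, hLcons]; rfl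
  by_cases hij : i = j
  · -- the first and last indices agree; multiply by `of k x` on both sides
    obtain ⟨k, hk⟩ := hι i
    obtain ⟨x, hx⟩ := hex k
    have hfstne : v.fstIdx ≠ some k := by
      rw [hfstv]
      exact fun hc => hk (Option.some_injective _ hc).symm
    have hx' : x * φ k h ∉ (φ k).range := by
      rintro ⟨a, ha⟩
      exact hx ⟨a * h⁻¹, by rw [map_mul, ha, map_inv, mul_assoc, mul_inv_cancel, mul_one]⟩
    have hne1 : x * φ k h ≠ 1 := fun hc => hx' (hc ▸ one_mem _)
    set v₃ := CoprodI.Word.cons (x * φ k h) v hfstne hne1 with hv₃def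
    have hv₃ : Reduced φ v₃ := reduced_cons hx' hv
    have key : of (φ := φ) k x * base φ h = of k (x * φ k h) := by
      rw [map_mul, of_apply_eq_base]
    have hc1 : of (φ := φ) k x * g = base φ 1 * ofCoprodI v₃.prod := by
      rw [hrep, ← mul_assoc, key, map_one, one_mul, hv₃def, CoprodI.Word.prod_cons,
        map_mul ofCoprodI, ofCoprodI_of]
    have hlastne : (v.toList.map Sigma.fst).getLast? ≠ some k := by
      rw [hj]
      exact fun hc => hk ((Option.some_injective _ hc).symm.trans hij.symm)
    obtain ⟨v₂, hv₂, hm₂, hp₂⟩ := exists_word_mul_of hx v hv hlastne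
    have hc2 : of (φ := φ) k x * g = base φ h * ofCoprodI v₂.prod := by
      rw [hcomm, hrep, mul_assoc, ← hp₂]
    have heq := map_fst_eq_of_rep_eq hφ hv₃ hv₂ (hc1.symm.trans hc2)
    rw [hv₃def, CoprodI.Word.cons_toList, List.map_cons, hm₂, hLcons] at heq
    simp only [List.cons_append, List.cons.injEq] at heq
    exact hk heq.1
  · -- first and last indices differ; conjugate by `of i x`
    obtain ⟨x, hx⟩ := hex i
    have hxinv : x⁻¹ ∉ (φ i).range := fun hc => hx (by simpa using inv_mem hc)
    have hlastne : (v.toList.map Sigma.fst).getLast? ≠ some i := by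
      rw [hj]
      exact fun hc => hij (Option.some_injective _ hc).symm
    obtain ⟨v₂, hv₂, hm₂, hp₂⟩ := exists_word_mul_of hxinv v hv hlastne
    have hfst₂ : v₂.fstIdx = some i := by
      rw [fstIdx_eq_head?, hm₂, hLcons]
      rfl
    have hgg : of (φ := φ) i x * (g * of i x⁻¹) = g := by
      rw [← hcomm, ← mul_assoc, ← map_mul, mul_inv_cancel, map_one, one_mul]
    have hx' : x * φ i h ∉ (φ i).range := by
      rintro ⟨a, ha⟩
      exact hx ⟨a * h⁻¹, by rw [map_mul, ha, map_inv, mul_assoc, mul_inv_cancel, mul_one]⟩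
    obtain ⟨h', v₃, hv₃, hcase, hp₃⟩ := exists_of_mul_word (x * φ i h) v₂ hv₂ hfst₂
    have key : of (φ := φ) i x * base φ h = of i (x * φ i h) := by
      rw [map_mul, of_apply_eq_base]
    have hc1 : g = base φ h' * ofCoprodI v₃.prod := by
      rw [← hgg, hrep, mul_assoc, ← hp₂, ← mul_assoc, key, hp₃]
    have heq := map_fst_eq_of_rep_eq hφ hv hv₃ (hrep.symm.trans hc1)
    rcases hcase with hcase | hcase
    · rw [hcase, hm₂] at heq
      have := congrArg List.length heq
      simp at this
    · rw [hcase, hm₂] at heq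
      rw [hLcons] at heq hj
      simp only [List.cons_append, List.tail_cons] at heq
      rw [heq, List.getLast?_concat] at hj
      exact hij (Option.some_injective _ hj)

end AmalgAux

/-- If `φ₁ : A → G₁` and `φ₂ : A → G₂` are injective but not surjective group homomorphisms,
then the center of the amalgamated free product `G₁ *_A G₂` is contained in the image under the
canonical map `ι : A → G₁ *_A G₂` of the center of `A`. -/
theorem center_amalgamated_le_center_base {A G₁ G₂ : Type u}
    [Group A] [Group G₁] [Group G₂] (φ₁ : A →* G₁) (φ₂ : A →* G₂)
    (h₁inj : Function.Injective φ₁) (h₂inj : Function.Injective φ₂)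
    (h₁ne : φ₁.range ≠ ⊤) (h₂ne : φ₂.range ≠ ⊤) :
    ∀ g ∈ Subgroup.center (Monoid.PushoutI (amalgHom φ₁ φ₂)),
      ∃ a ∈ Subgroup.center A, Monoid.PushoutI.base (amalgHom φ₁ φ₂) a = g := by
  intro g hg
  have hφ : ∀ b, Function.Injective (amalgHom φ₁ φ₂ b) := by
    intro b; cases b
    · exact h₂inj
    · exact h₁inj
  have hne : ∀ b, (amalgHom φ₁ φ₂ b).range ≠ ⊤ := by
    intro b; cases b
    · exact h₂ne
    · exact h₁ne
  have hι : ∀ b : Bool, ∃ c, c ≠ b := fun b => ⟨!b, by cases b <;> decide⟩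
  obtain ⟨a, ha⟩ := AmalgAux.center_le_base_range hφ hne hι hg
  refine ⟨a, ?_, ha⟩
  rw [Subgroup.mem_center_iff]
  intro b
  apply Monoid.PushoutI.base_injective hφ
  rw [map_mul, map_mul, ha]
  exact Subgroup.mem_center_iff.1 hg _
end
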